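/- arXiv:1107.3009 — 6 statements merged into one kernel-verified Lean document; each statement's English description precedes it below -/
import Mathlib

section
/- Let R be a commutative ring, n ≥ 3 a natural number, and let 𝔞, 𝔟 be two comaximal ideals of R, i.e. 𝔞 + 𝔟 = R. Then ⁅E(n,R,𝔞), E(n,R,𝔟)⁆ = E(n,R,𝔞𝔟), where 𝔞𝔟 is the product of the two ideals. (Type A_{n−1} instance of the paper's Theorem 3; for type A the residue-field hypothesis is vacuous.) -/
open Matrix

/-- `SL n R` : the special linear group of degree `n` over `R`,
the simply connected Chevalley group of type `A_{n-1}`. -/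
abbrev SL (n : ℕ) (R : Type*) [CommRing R] := Matrix.SpecialLinearGroup (Fin n) R

/-- The elementary transvection `e_{ij}(a) = 1 + a·E_{ij}` as an element of `SL n R`. -/
def elemTransv {n : ℕ} {R : Type*} [CommRing R] (i j : Fin n) (h : i ≠ j) (a : R) :
    SL n R :=
  ⟨Matrix.transvection i j a, Matrix.det_transvection_of_ne i j h a⟩

/-- The set of elementary transvections with parameters in `S`. -/
def transvSet (n : ℕ) {R : Type*} [CommRing R] (S : Set R) : Set (SL n R) :=
  { x | ∃ i j : Fin n, ∃ h : i ≠ j, ∃ a ∈ S, x = elemTransv i j h a }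

/-- `E(n,S)` : the subgroup generated by elementary transvections with parameters in `S`. -/
def Esub (n : ℕ) {R : Type*} [CommRing R] (S : Set R) : Subgroup (SL n R) :=
  Subgroup.closure (transvSet n S)

/-- `E(n,T,S)` : the normal closure of `E(n,S)` in `E(n,T)`, i.e. the subgroup
generated by the conjugates of elementary generators of level `S` by elements
of `E(n,T)`. -/
def relESet (n : ℕ) {R : Type*} [CommRing R] (T S : Set R) : Subgroup (SL n R) :=
  Subgroup.closure
    { x | ∃ g ∈ Esub n T, ∃ y ∈ transvSet n S, x = g * y * g⁻¹ }

/-- `E(n,R,I)` : the relative elementary subgroup, the normal closure of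
`E(n,I)` in the absolute elementary subgroup `E(n,R)`. -/
def relE (n : ℕ) {R : Type*} [CommRing R] (I : Ideal R) : Subgroup (SL n R) :=
  relESet n (Set.univ : Set R) (I : Set R)

/-- The reduction homomorphism `SL(n,R) → SL(n,R/I)`. -/
def redMap (n : ℕ) {R : Type*} [CommRing R] (I : Ideal R) : SL n R →* SL n (R ⧸ I) :=
  Matrix.SpecialLinearGroup.map (Ideal.Quotient.mk I)

/-- `SL(n,R,I)` : the principal congruence subgroup of level `I`. -/
def SLcong (n : ℕ) {R : Type*} [CommRing R] (I : Ideal R) : Subgroup (SL n R) :=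
  (redMap n I).ker

/-- `C(n,R,I)` : the full congruence subgroup of level `I`. -/
def Ccong (n : ℕ) {R : Type*} [CommRing R] (I : Ideal R) : Subgroup (SL n R) :=
  Subgroup.comap (redMap n I) (Subgroup.center (SL n (R ⧸ I)))

namespace CommRelEAux
open scoped commutatorElement
variable {R : Type*} [CommRing R] {n : ℕ}

lemma elemTransv_mul (i j : Fin n) (h : i ≠ j) (x y : R) :
    elemTransv i j h x * elemTransv i j h y = elemTransv i j h (x + y) := by
  apply Subtype.ext
  show Matrix.transvection i j x * Matrix.transvection i j y = Matrix.transvection i j (x + y)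
  exact Matrix.transvection_mul_transvection_same i j h x y

lemma elemTransv_zero (i j : Fin n) (h : i ≠ j) : elemTransv i j h (0 : R) = 1 := by
  apply Subtype.ext
  show Matrix.transvection i j (0 : R) = 1
  simp

lemma elemTransv_inv (i j : Fin n) (h : i ≠ j) (x : R) :
    (elemTransv i j h x)⁻¹ = elemTransv i j h (-x) :=
  inv_eq_of_mul_eq_one_right (by rw [elemTransv_mul]; simp [elemTransv_zero i j h])

lemma elemTransv_commute {i j k l : Fin n} (hij : i ≠ j) (hkl : k ≠ l)
    (hjk : j ≠ k) (hli : l ≠ i) (x y : R) :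
    elemTransv i j hij x * elemTransv k l hkl y
      = elemTransv k l hkl y * elemTransv i j hij x := by
  apply Subtype.ext
  show Matrix.transvection i j x * Matrix.transvection k l y
      = Matrix.transvection k l y * Matrix.transvection i j x
  simp only [Matrix.transvection, add_mul, mul_add, one_mul, mul_one]
  rw [Matrix.single_mul_single_of_ne (c := x) i j _ hjk y, Matrix.single_mul_single_of_ne (c := y) k l _ hli x]
  abel

lemma elemTransv_comm_adj (i j k : Fin n) (hij : i ≠ j) (hjk : j ≠ k) (hik : i ≠ k)
    (x y : R) :
    ⁅elemTransv i j hij x, elemTransv j k hjk y⁆ = elemTransv i k hik (x * y) := by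
  have key : elemTransv i j hij x * elemTransv j k hjk y
      = elemTransv i k hik (x * y) * (elemTransv j k hjk y * elemTransv i j hij x) := by
    apply Subtype.ext
    show Matrix.transvection i j x * Matrix.transvection j k y
        = Matrix.transvection i k (x*y) * (Matrix.transvection j k y * Matrix.transvection i j x)
    simp only [Matrix.transvection, add_mul, mul_add, one_mul, mul_one]
    rw [Matrix.single_mul_single_same (c := x) i j k y,
      Matrix.single_mul_single_of_ne (c := y) j k _ (Ne.symm hik) x,
      Matrix.single_mul_single_of_ne (c := x*y) i k _ (Ne.symm hjk) y,
      Matrix.single_mul_single_of_ne (c := x*y) i k _ (Ne.symm hik) x]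
    simp only [mul_zero, add_zero, zero_add]
    abel
  rw [commutatorElement_def, key]
  group


/-- `E(n, R)`, the full elementary subgroup. -/
def GF (n : ℕ) (R : Type*) [CommRing R] : Subgroup (SL n R) := Esub n (Set.univ : Set R)

lemma elem_mem_Esub {S : Set R} (i j : Fin n) (h : i ≠ j) {x : R} (hx : x ∈ S) :
    elemTransv i j h x ∈ Esub n S :=
  Subgroup.subset_closure ⟨i, j, h, x, hx, rfl⟩

lemma elem_mem_G (i j : Fin n) (h : i ≠ j) (x : R) :
    elemTransv i j h x ∈ GF n R :=
  elem_mem_Esub i j h (Set.mem_univ x)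

lemma elem_mem_relE {I : Ideal R} (i j : Fin n) (h : i ≠ j) {x : R} (hx : x ∈ I) :
    elemTransv i j h x ∈ relE n I :=
  Subgroup.subset_closure ⟨1, one_mem _, elemTransv i j h x, ⟨i, j, h, x, hx, rfl⟩, by group⟩

lemma relE_le_G (I : Ideal R) : relE n I ≤ GF n R := by
  apply (Subgroup.closure_le _).mpr
  rintro x ⟨g, hg, y, ⟨i, j, hij, c, hc, rfl⟩, rfl⟩
  exact mul_mem (mul_mem hg (elem_mem_G i j hij c)) (inv_mem hg)

lemma conj_mem_relE {I : Ideal R} {g x : SL n R} (hg : g ∈ GF n R)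
    (hx : x ∈ relE n I) : g * x * g⁻¹ ∈ relE n I := by
  refine Subgroup.closure_induction
    (p := fun x _ => g * x * g⁻¹ ∈ relE n I) ?_ ?_ ?_ ?_ hx
  · rintro w ⟨p, hp, z, hz, rfl⟩
    have h1 : g * (p * z * p⁻¹) * g⁻¹ = (g * p) * z * (g * p)⁻¹ := by group
    rw [h1]
    exact Subgroup.subset_closure ⟨g * p, mul_mem hg hp, z, hz, rfl⟩
  · show g * 1 * g⁻¹ ∈ relE n I
    have h1 : g * 1 * g⁻¹ = (1 : SL n R) := by group
    rw [h1]; exact one_mem _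
  · intro u v _ _ ihu ihv
    have h1 : g * (u * v) * g⁻¹ = (g * u * g⁻¹) * (g * v * g⁻¹) := by group
    rw [h1]; exact mul_mem ihu ihv
  · intro u _ ihu
    have h1 : g * u⁻¹ * g⁻¹ = (g * u * g⁻¹)⁻¹ := by group
    rw [h1]; exact inv_mem ihu

lemma exists_third (hn : 3 ≤ n) (i j : Fin n) : ∃ m : Fin n, m ≠ i ∧ m ≠ j := by
  by_contra hcon
  push_neg at hcon
  have hsub : (Finset.univ : Finset (Fin n)) ⊆ {i, j} := by
    intro m _
    rcases eq_or_ne m i with h | h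
    · simp [h]
    · simp [hcon m h]
  have h1 := Finset.card_le_card hsub
  have h2 : ({i, j} : Finset (Fin n)).card ≤ 2 :=
    (Finset.card_insert_le _ _).trans (by simp)
  rw [Finset.card_univ, Fintype.card_fin] at h1
  omega

/-- The quotient of `E(n,R)` by (the preimage of) `E(n,R,I)`. -/
instance normalK (I : Ideal R) : ((relE n I).subgroupOf (GF n R)).Normal := by
  constructor
  intro x hx g
  rw [Subgroup.mem_subgroupOf] at hx ⊢
  have h1 : ((g * x * g⁻¹ : GF n R) : SL n R) = (g : SL n R) * x * (g : SL n R)⁻¹ := rfl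
  rw [h1]
  exact conj_mem_relE g.2 hx

/-- The quotient map. -/
def ψ (I : Ideal R) : GF n R →* GF n R ⧸ (relE n I).subgroupOf (GF n R) :=
  QuotientGroup.mk' _

/-- Elementary transvection as element of `GF`. -/
def eG (i j : Fin n) (h : i ≠ j) (c : R) : GF n R := ⟨elemTransv i j h c, elem_mem_G i j h c⟩

lemma psi_eq_one_iff (I : Ideal R) (u : GF n R) :
    ψ I u = 1 ↔ (u : SL n R) ∈ relE n I := by
  rw [ψ, QuotientGroup.mk'_apply, QuotientGroup.eq_one_iff, Subgroup.mem_subgroupOf]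

lemma coe_commutator (u v : GF n R) :
    ((⁅u, v⁆ : GF n R) : SL n R) = ⁅(u : SL n R), (v : SL n R)⁆ := rfl

lemma psi_comm_of_mem (I : Ideal R) (u v : GF n R)
    (h : ⁅(u : SL n R), (v : SL n R)⁆ ∈ relE n I) :
    Commute (ψ I u) (ψ I v) := by
  rw [← commutatorElement_eq_one_iff_commute, ← map_commutatorElement]
  exact (psi_eq_one_iff I _).mpr (by rw [coe_commutator]; exact h)

lemma eG_mul (i j : Fin n) (h : i ≠ j) (x y : R) :
    eG i j h x * eG i j h y = eG i j h (x + y) :=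
  Subtype.ext (elemTransv_mul i j h x y)

lemma eG_coe (i j : Fin n) (h : i ≠ j) (c : R) :
    ((eG i j h c : GF n R) : SL n R) = elemTransv i j h c := rfl

lemma psi_eG_eq_one {a b : Ideal R} (i j : Fin n) (h : i ≠ j) {c : R} (hc : c ∈ a * b) :
    ψ (a * b) (eG i j h c) = 1 :=
  (psi_eq_one_iff _ _).mpr (elem_mem_relE i j h hc)

lemma opp_commute {a b : Ideal R} (hn : 3 ≤ n) {s t : R} (hs : s ∈ a) (ht : t ∈ b)
    (hst : s + t = 1) (i j : Fin n) (hij : i ≠ j) (hji : j ≠ i) {x y : R}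
    (hx : x ∈ a) (hy : y ∈ b) :
    Commute (ψ (a * b) (eG i j hij x)) (ψ (a * b) (eG j i hji y)) := by
  obtain ⟨m, hmi, hmj⟩ := exists_third hn i j
  have him : i ≠ m := Ne.symm hmi
  have h1 : Commute (ψ (a * b) (eG i m him x)) (ψ (a * b) (eG j i hji y)) := by
    refine (psi_comm_of_mem _ _ _ ?_).symm
    simp only [eG_coe]
    rw [elemTransv_comm_adj j i m hji him (Ne.symm hmj) y x]
    exact elem_mem_relE _ _ _ (Ideal.mul_mem_mul_rev hx hy)
  have h2 : Commute (ψ (a * b) (eG m j hmj s)) (ψ (a * b) (eG j i hji y)) := by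
    apply psi_comm_of_mem
    simp only [eG_coe]
    rw [elemTransv_comm_adj m j i hmj hji hmi s y]
    exact elem_mem_relE _ _ _ (Ideal.mul_mem_mul hs hy)
  have hxt : ψ (a * b) (eG i j hij (x * t)) = 1 :=
    psi_eG_eq_one _ _ _ (Ideal.mul_mem_mul hx ht)
  have key : ψ (a * b) (eG i j hij x)
      = ⁅ψ (a * b) (eG i m him x), ψ (a * b) (eG m j hmj s)⁆ := by
    have e1 : eG i j hij x = ⁅eG i m him x, eG m j hmj s⁆ * eG i j hij (x * t) := by
      apply Subtype.ext
      show elemTransv i j hij x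
          = ⁅elemTransv i m him x, elemTransv m j hmj s⁆ * elemTransv i j hij (x * t)
      rw [elemTransv_comm_adj i m j him hmj hij x s, elemTransv_mul,
        show x * s + x * t = x by rw [← mul_add, hst, mul_one]]
    rw [e1, _root_.map_mul, map_commutatorElement, hxt, mul_one]
  rw [key, commutatorElement_def]
  exact ((h1.mul_left h2).mul_left h1.inv_left).mul_left h2.inv_left

lemma base_commute {a b : Ideal R} (hn : 3 ≤ n) {s t : R} (hs : s ∈ a) (ht : t ∈ b)
    (hst : s + t = 1) (i j k l : Fin n) (hij : i ≠ j) (hkl : k ≠ l)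
    {x y : R} (hx : x ∈ a) (hy : y ∈ b) :
    Commute (ψ (a * b) (eG i j hij x)) (ψ (a * b) (eG k l hkl y)) := by
  rcases eq_or_ne j k with rfl | hjk
  · rcases eq_or_ne l i with rfl | hli
    · exact opp_commute hn hs ht hst _ _ hij hkl hx hy
    · apply psi_comm_of_mem
      simp only [eG_coe]
      rw [elemTransv_comm_adj i j l hij hkl (fun hh => hli hh.symm) x y]
      exact elem_mem_relE _ _ _ (Ideal.mul_mem_mul hx hy)
  · rcases eq_or_ne l i with rfl | hli
    · refine (psi_comm_of_mem _ _ _ ?_).symm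
      simp only [eG_coe]
      rw [elemTransv_comm_adj k l j hkl hij (fun hh => hjk hh.symm) y x]
      exact elem_mem_relE _ _ _ (Ideal.mul_mem_mul_rev hx hy)
    · have h0 : eG i j hij x * eG k l hkl y = eG k l hkl y * eG i j hij x :=
        Subtype.ext (elemTransv_commute hij hkl hjk hli x y)
      have h1 := congrArg (ψ (a * b)) h0
      rw [_root_.map_mul, _root_.map_mul] at h1
      exact h1

lemma psi_mem_of_gens (I : Ideal R)
    (E : Subgroup (GF n R ⧸ (relE n I).subgroupOf (GF n R)))
    (hE : ∀ (i j : Fin n) (h : i ≠ j) (c : R), ψ I (eG i j h c) ∈ E) (g : GF n R) :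
    ψ I g ∈ E := by
  obtain ⟨x, hx⟩ := g
  refine Subgroup.closure_induction
    (p := fun x hx => ψ I ⟨x, hx⟩ ∈ E) ?_ ?_ ?_ ?_ hx
  · rintro w ⟨i, j, hij, c, -, rfl⟩
    exact hE i j hij c
  · show ψ I 1 ∈ E
    rw [_root_.map_one]; exact one_mem E
  · intro u v hu hv ihu ihv
    show ψ I (⟨u, hu⟩ * ⟨v, hv⟩) ∈ E
    rw [_root_.map_mul]; exact mul_mem ihu ihv
  · intro u hu ihu
    show ψ I (⟨u, hu⟩)⁻¹ ∈ E
    rw [_root_.map_inv]; exact inv_mem ihu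

lemma comm_le (hn : 3 ≤ n) (a b : Ideal R) (hab : a + b = ⊤) :
    ⁅relE n a, relE n b⁆ ≤ relE n (a * b) := by
  obtain ⟨s, hs, t, ht, hst⟩ : ∃ s ∈ a, ∃ t ∈ b, s + t = 1 := by
    have h1 : (1 : R) ∈ a + b := by rw [hab]; trivial
    rw [Submodule.add_eq_sup] at h1
    exact Submodule.mem_sup.mp h1
  let SA : Set (GF n R ⧸ (relE n (a * b)).subgroupOf (GF n R)) :=
    {q | ∃ i j, ∃ (h : i ≠ j), ∃ x ∈ a, q = ψ (a * b) (eG i j h x)}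
  let SB : Set (GF n R ⧸ (relE n (a * b)).subgroupOf (GF n R)) :=
    {q | ∃ i j, ∃ (h : i ≠ j), ∃ y ∈ b, q = ψ (a * b) (eG i j h y)}
  let A := Subgroup.closure SA
  let B := Subgroup.closure SB
  have hcomm : ∀ u ∈ A, ∀ v ∈ B, Commute u v := by
    have step1 : ∀ u ∈ SA, ∀ v ∈ B, Commute u v := by
      rintro u ⟨i, j, hij, x, hx, rfl⟩ v hv
      have hle : B ≤ Subgroup.centralizer {ψ (a * b) (eG i j hij x)} := by
        apply (Subgroup.closure_le _).mpr
        rintro w ⟨k, l, hkl, y, hy, rfl⟩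
        rw [SetLike.mem_coe, Subgroup.mem_centralizer_singleton_iff]
        exact (base_commute hn hs ht hst i j k l hij hkl hx hy).eq.symm
      exact (Subgroup.mem_centralizer_singleton_iff.mp (hle hv)).symm
    intro u hu v hv
    have hle : A ≤ Subgroup.centralizer {v} := by
      apply (Subgroup.closure_le _).mpr
      intro w hw
      rw [SetLike.mem_coe, Subgroup.mem_centralizer_singleton_iff]
      exact (step1 w hw v hv).eq
    exact Subgroup.mem_centralizer_singleton_iff.mp (hle hu)
  have hconjA : ∀ v ∈ B, ∀ h ∈ A, v * h * v⁻¹ = h := by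
    intro v hv h hh
    have h1 := (hcomm h hh v hv).eq
    rw [← h1, mul_inv_cancel_right]
  have hconjB : ∀ u ∈ A, ∀ h ∈ B, u * h * u⁻¹ = h := by
    intro u hu h hh
    have h1 := (hcomm u hu h hh).eq
    rw [h1, mul_inv_cancel_right]
  have hnormA : ∀ g : GF n R, ψ (a * b) g ∈ Subgroup.normalizer A := by
    intro g
    apply psi_mem_of_gens
    intro i j hij c
    have hdec : eG i j hij c = eG i j hij (c * s) * eG i j hij (c * t) := by
      rw [eG_mul, ← mul_add, hst, mul_one]
    rw [hdec, _root_.map_mul]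
    refine mul_mem ?_ ?_
    · exact Subgroup.le_normalizer
        (Subgroup.subset_closure ⟨i, j, hij, c * s, Ideal.mul_mem_left a c hs, rfl⟩)
    · have hvB : ψ (a * b) (eG i j hij (c * t)) ∈ B :=
        Subgroup.subset_closure ⟨i, j, hij, c * t, Ideal.mul_mem_left b c ht, rfl⟩
      rw [Subgroup.mem_normalizer_iff]
      intro h
      constructor
      · intro hh
        rw [hconjA _ hvB h hh]; exact hh
      · intro hh'
        set v := ψ (a * b) (eG i j hij (c * t))
        have h2 : v⁻¹ * (v * h * v⁻¹) * (v⁻¹)⁻¹ = h := by group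
        rw [hconjA _ (inv_mem hvB) _ hh'] at h2
        rw [← h2]; exact hh'
  have hnormB : ∀ g : GF n R, ψ (a * b) g ∈ Subgroup.normalizer B := by
    intro g
    apply psi_mem_of_gens
    intro i j hij c
    have hdec : eG i j hij c = eG i j hij (c * s) * eG i j hij (c * t) := by
      rw [eG_mul, ← mul_add, hst, mul_one]
    rw [hdec, _root_.map_mul]
    refine mul_mem ?_ ?_
    · have huA : ψ (a * b) (eG i j hij (c * s)) ∈ A :=
        Subgroup.subset_closure ⟨i, j, hij, c * s, Ideal.mul_mem_left a c hs, rfl⟩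
      rw [Subgroup.mem_normalizer_iff]
      intro h
      constructor
      · intro hh
        rw [hconjB _ huA h hh]; exact hh
      · intro hh'
        set v := ψ (a * b) (eG i j hij (c * s))
        have h2 : v⁻¹ * (v * h * v⁻¹) * (v⁻¹)⁻¹ = h := by group
        rw [hconjB _ (inv_mem huA) _ hh'] at h2
        rw [← h2]; exact hh'
    · exact Subgroup.le_normalizer
        (Subgroup.subset_closure ⟨i, j, hij, c * t, Ideal.mul_mem_left b c ht, rfl⟩)
  have hAim : ∀ w, w ∈ relE n a → ∀ hG : w ∈ GF n R, ψ (a * b) ⟨w, hG⟩ ∈ A := by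
    intro w hw
    refine Subgroup.closure_induction
      (p := fun w _ => ∀ hG : w ∈ GF n R, ψ (a * b) ⟨w, hG⟩ ∈ A) ?_ ?_ ?_ ?_ hw
    · rintro w ⟨g, hgG, y, ⟨i, j, hij, x, hx, rfl⟩, rfl⟩ hG
      have e1 : (⟨g * elemTransv i j hij x * g⁻¹, hG⟩ : GF n R)
          = ⟨g, hgG⟩ * eG i j hij x * (⟨g, hgG⟩ : GF n R)⁻¹ := rfl
      rw [e1, _root_.map_mul, _root_.map_mul, _root_.map_inv]
      exact (Subgroup.mem_normalizer_iff.mp (hnormA ⟨g, hgG⟩) _).mp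
        (Subgroup.subset_closure ⟨i, j, hij, x, hx, rfl⟩)
    · intro hG
      show ψ (a * b) 1 ∈ A
      rw [_root_.map_one]; exact one_mem A
    · intro u v hu hv ihu ihv hG
      have huG : u ∈ GF n R := relE_le_G a hu
      have hvG : v ∈ GF n R := relE_le_G a hv
      have e1 : (⟨u * v, hG⟩ : GF n R) = ⟨u, huG⟩ * ⟨v, hvG⟩ := rfl
      rw [e1, _root_.map_mul]; exact mul_mem (ihu huG) (ihv hvG)
    · intro u hu ihu hG
      have huG : u ∈ GF n R := relE_le_G a hu
      have e1 : (⟨u⁻¹, hG⟩ : GF n R) = (⟨u, huG⟩ : GF n R)⁻¹ := rfl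
      rw [e1, _root_.map_inv]; exact inv_mem (ihu huG)
  have hBim : ∀ w, w ∈ relE n b → ∀ hG : w ∈ GF n R, ψ (a * b) ⟨w, hG⟩ ∈ B := by
    intro w hw
    refine Subgroup.closure_induction
      (p := fun w _ => ∀ hG : w ∈ GF n R, ψ (a * b) ⟨w, hG⟩ ∈ B) ?_ ?_ ?_ ?_ hw
    · rintro w ⟨g, hgG, y, ⟨i, j, hij, x, hx, rfl⟩, rfl⟩ hG
      have e1 : (⟨g * elemTransv i j hij x * g⁻¹, hG⟩ : GF n R)
          = ⟨g, hgG⟩ * eG i j hij x * (⟨g, hgG⟩ : GF n R)⁻¹ := rfl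
      rw [e1, _root_.map_mul, _root_.map_mul, _root_.map_inv]
      exact (Subgroup.mem_normalizer_iff.mp (hnormB ⟨g, hgG⟩) _).mp
        (Subgroup.subset_closure ⟨i, j, hij, x, hx, rfl⟩)
    · intro hG
      show ψ (a * b) 1 ∈ B
      rw [_root_.map_one]; exact one_mem B
    · intro u v hu hv ihu ihv hG
      have huG : u ∈ GF n R := relE_le_G b hu
      have hvG : v ∈ GF n R := relE_le_G b hv
      have e1 : (⟨u * v, hG⟩ : GF n R) = ⟨u, huG⟩ * ⟨v, hvG⟩ := rfl
      rw [e1, _root_.map_mul]; exact mul_mem (ihu huG) (ihv hvG)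
    · intro u hu ihu hG
      have huG : u ∈ GF n R := relE_le_G b hu
      have e1 : (⟨u⁻¹, hG⟩ : GF n R) = (⟨u, huG⟩ : GF n R)⁻¹ := rfl
      rw [e1, _root_.map_inv]; exact inv_mem (ihu huG)
  rw [Subgroup.commutator_le]
  intro g hg h hh
  have hgG : g ∈ GF n R := relE_le_G a hg
  have hhG : h ∈ GF n R := relE_le_G b hh
  have hc := hcomm _ (hAim g hg hgG) _ (hBim h hh hhG)
  have h1 : ψ (a * b) ⁅(⟨g, hgG⟩ : GF n R), ⟨h, hhG⟩⁆ = 1 := by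
    rw [map_commutatorElement]
    exact commutatorElement_eq_one_iff_commute.mpr hc
  have h2 := (psi_eq_one_iff (a * b) _).mp h1
  rw [coe_commutator] at h2
  exact h2

lemma relE_mul_le (hn : 3 ≤ n) (a b : Ideal R) :
    relE n (a * b) ≤ ⁅relE n a, relE n b⁆ := by
  have hW : ∀ g ∈ GF n R, ∀ w ∈ ⁅relE n a, relE n b⁆,
      g * w * g⁻¹ ∈ ⁅relE n a, relE n b⁆ := by
    intro g hg w hw
    have h1 : Subgroup.map (MulAut.conj g).toMonoidHom ⁅relE n a, relE n b⁆
        ≤ ⁅relE n a, relE n b⁆ := by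
      rw [Subgroup.map_commutator]
      apply Subgroup.commutator_mono <;>
      · rw [Subgroup.map_le_iff_le_comap]
        intro x hx
        rw [Subgroup.mem_comap]
        simpa using conj_mem_relE hg hx
    have h2 : (MulAut.conj g).toMonoidHom w
        ∈ Subgroup.map (MulAut.conj g).toMonoidHom ⁅relE n a, relE n b⁆ :=
      Subgroup.mem_map_of_mem _ hw
    simpa using h1 h2
  apply (Subgroup.closure_le _).mpr
  rintro x ⟨g, hg, y, ⟨i, j, hij, c, hc, rfl⟩, rfl⟩
  apply hW g hg
  have hc' : c ∈ a * b := hc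
  refine Submodule.mul_induction_on hc' (fun u hu v hv => ?_) (fun u v ihu ihv => ?_)
  · obtain ⟨m, hmi, hmj⟩ := exists_third hn i j
    rw [← elemTransv_comm_adj i m j (Ne.symm hmi) hmj hij u v]
    exact Subgroup.commutator_mem_commutator
      (elem_mem_relE _ _ _ hu) (elem_mem_relE _ _ _ hv)
  · rw [← elemTransv_mul]
    exact mul_mem ihu ihv

end CommRelEAux


/-- For a commutative ring `R`, `n ≥ 3` and comaximal ideals `𝔞 + 𝔟 = R`,
`⁅E(n,R,𝔞), E(n,R,𝔟)⁆ = E(n,R,𝔞𝔟)`. -/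
theorem commutator_relE_relE_eq_relE_mul_of_comaximal
    {R : Type*} [CommRing R] (n : ℕ) (hn : 3 ≤ n) (a b : Ideal R)
    (hab : a + b = ⊤) :
    ⁅relE n a, relE n b⁆ = relE n (a * b) :=
  le_antisymm (CommRelEAux.comm_le hn a b hab) (CommRelEAux.relE_mul_le hn a b)
end

section
/- Let R be a commutative ring and n ≥ 2 a natural number. For any two ideals 𝔞 and 𝔟 of R one has E(n,R,𝔞) ⊔ E(n,R,𝔟) = E(n,R,𝔞+𝔟); equivalently, the product of the two relative elementary subgroups E(n,R,𝔞)·E(n,R,𝔟) equals E(n,R,𝔞+𝔟). (Type A_{n−1} instance of the paper's Lemma that E(Φ,R,𝔞)E(Φ,R,𝔟) = E(Φ,R,𝔞+𝔟), which holds even for rank 1.) -/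
open Matrix Pointwise

lemma elemTransv_add {n : ℕ} {R : Type*} [CommRing R] (i j : Fin n) (h : i ≠ j) (x y : R) :
    elemTransv i j h (x + y) = elemTransv i j h x * elemTransv i j h y := by
  apply Subtype.ext
  exact (Matrix.transvection_mul_transvection_same i j h x y).symm

lemma relE_le_Esub {n : ℕ} {R : Type*} [CommRing R] (I : Ideal R) :
    relE n I ≤ Esub n (Set.univ : Set R) := by
  apply Subgroup.closure_le _ |>.2
  rintro x ⟨g, hg, y, hy, rfl⟩
  have hy' : y ∈ Esub n (Set.univ : Set R) := by
    apply Subgroup.subset_closure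
    obtain ⟨i, j, hij, c, _, rfl⟩ := hy
    exact ⟨i, j, hij, c, Set.mem_univ c, rfl⟩
  exact mul_mem (mul_mem hg hy') (inv_mem hg)

lemma relE_conj {n : ℕ} {R : Type*} [CommRing R] (I : Ideal R) {g x : SL n R}
    (hg : g ∈ Esub n (Set.univ : Set R)) (hx : x ∈ relE n I) :
    g * x * g⁻¹ ∈ relE n I := by
  induction hx using Subgroup.closure_induction with
  | mem z hz =>
      obtain ⟨h, hh, y, hy, rfl⟩ := hz
      have : g * (h * y * h⁻¹) * g⁻¹ = (g * h) * y * (g * h)⁻¹ := by group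
      rw [this]
      exact Subgroup.subset_closure ⟨g * h, mul_mem hg hh, y, hy, rfl⟩
  | one => simpa using one_mem _
  | mul u v _ _ hu hv =>
      have : g * (u * v) * g⁻¹ = (g * u * g⁻¹) * (g * v * g⁻¹) := by group
      rw [this]; exact mul_mem hu hv
  | inv u _ hu =>
      have : g * u⁻¹ * g⁻¹ = (g * u * g⁻¹)⁻¹ := by group
      rw [this]; exact inv_mem hu

lemma relE_mono {n : ℕ} {R : Type*} [CommRing R] {I J : Ideal R} (h : I ≤ J) :
    relE n I ≤ relE n J := by
  apply Subgroup.closure_mono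
  rintro x ⟨g, hg, y, ⟨i, j, hij, c, hc, rfl⟩, rfl⟩
  exact ⟨g, hg, _, ⟨i, j, hij, c, h hc, rfl⟩, rfl⟩

/-- For a commutative ring `R`, `n ≥ 2` and ideals `𝔞, 𝔟 ⊴ R`,
`E(n,R,𝔞) ⊔ E(n,R,𝔟) = E(n,R,𝔞+𝔟)`; equivalently, the set-product
`E(n,R,𝔞)·E(n,R,𝔟)` equals `E(n,R,𝔞+𝔟)`. -/
theorem relE_sup_relE_eq_relE_add
    {R : Type*} [CommRing R] (n : ℕ) (hn : 2 ≤ n) (a b : Ideal R) :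
    relE n a ⊔ relE n b = relE n (a + b) ∧
      (relE n a : Set (SL n R)) * (relE n b : Set (SL n R)) =
        (relE n (a + b) : Set (SL n R)) := by
  have hsup : relE n a ⊔ relE n b = relE n (a + b) := by
    have hab : a + b = a ⊔ b := rfl
    apply le_antisymm
    · exact sup_le (relE_mono (by rw [hab]; exact le_sup_left))
        (relE_mono (by rw [hab]; exact le_sup_right))
    · apply Subgroup.closure_le _ |>.2
      rintro x ⟨g, hg, y, ⟨i, j, hij, c, hc, rfl⟩, rfl⟩
      obtain ⟨u, hu, v, hv, huv⟩ := Submodule.mem_sup.1 hc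
      have : g * elemTransv i j hij c * g⁻¹ =
          (g * elemTransv i j hij u * g⁻¹) * (g * elemTransv i j hij v * g⁻¹) := by
        rw [← huv, elemTransv_add]; group
      rw [this]
      exact mul_mem
        (Subgroup.mem_sup_left (Subgroup.subset_closure
          ⟨g, hg, _, ⟨i, j, hij, u, hu, rfl⟩, rfl⟩))
        (Subgroup.mem_sup_right (Subgroup.subset_closure
          ⟨g, hg, _, ⟨i, j, hij, v, hv, rfl⟩, rfl⟩))
  refine ⟨hsup, ?_⟩
  apply Set.Subset.antisymm
  · rintro x ⟨u, hu, v, hv, rfl⟩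
    rw [← hsup]
    exact mul_mem (Subgroup.mem_sup_left hu) (Subgroup.mem_sup_right hv)
  · intro x hx
    have hx' : x ∈ relE n (a + b) := hx
    clear hx
    have key : ∃ u ∈ relE n a, ∃ v ∈ relE n b, x = u * v := by
      induction hx' using Subgroup.closure_induction with
      | mem z hz =>
          obtain ⟨g, hg, y, ⟨i, j, hij, c, hc, rfl⟩, rfl⟩ := hz
          obtain ⟨u, hu, v, hv, huv⟩ := Submodule.mem_sup.1 hc
          refine ⟨g * elemTransv i j hij u * g⁻¹,
            Subgroup.subset_closure ⟨g, hg, _, ⟨i, j, hij, u, hu, rfl⟩, rfl⟩,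
            g * elemTransv i j hij v * g⁻¹,
            Subgroup.subset_closure ⟨g, hg, _, ⟨i, j, hij, v, hv, rfl⟩, rfl⟩, ?_⟩
          rw [← huv, elemTransv_add]; group
      | one => exact ⟨1, one_mem _, 1, one_mem _, by simp⟩
      | mul s t _ _ hs ht =>
          obtain ⟨u1, hu1, v1, hv1, rfl⟩ := hs
          obtain ⟨u2, hu2, v2, hv2, rfl⟩ := ht
          refine ⟨u1 * (v1 * u2 * v1⁻¹), mul_mem hu1 ?_, v1 * v2, mul_mem hv1 hv2, by group⟩
          exact relE_conj a (relE_le_Esub b hv1) hu2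
      | inv s _ hs =>
          obtain ⟨u, hu, v, hv, rfl⟩ := hs
          exact ⟨v⁻¹ * u⁻¹ * v⁻¹⁻¹,
            relE_conj a (inv_mem (relE_le_Esub b hv)) (inv_mem hu),
            v⁻¹, inv_mem hv, by group⟩
    obtain ⟨u, hu, v, hv, rfl⟩ := key
    exact ⟨u, hu, v, hv, rfl⟩
end

section
/- Let R be a commutative ring, n ≥ 3 a natural number, and let 𝔞, 𝔟 be two ideals of R. Then E(n,R,𝔞𝔟) ≤ E(n, 𝔞+𝔟): the relative elementary subgroup of level the product ideal 𝔞𝔟 is contained in the (non-relative) elementary subgroup generated by transvections with parameters in 𝔞+𝔟. (Type A_{n−1} instance of the paper's Lemma: for Φ ≠ C_l, E(Φ,R,𝔞𝔟) ≤ E(Φ,𝔞+𝔟).) -/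
open Matrix

section RelEAux

variable {R : Type*} [CommRing R] {n : ℕ}

lemma vmv_mul (u w x y : Fin n → R) :
    vecMulVec u w * vecMulVec x y = (w ⬝ᵥ x) • vecMulVec u y := by
  ext p q
  simp only [mul_apply, vecMulVec_apply, Matrix.smul_apply, dotProduct, smul_eq_mul,
    Finset.sum_mul]
  exact Finset.sum_congr rfl fun k _ => by ring

lemma mul_vmv (M : Matrix (Fin n) (Fin n) R) (x y : Fin n → R) :
    M * vecMulVec x y = vecMulVec (M *ᵥ x) y := by
  ext p q
  simp only [mul_apply, vecMulVec_apply, mulVec, dotProduct, Finset.sum_mul]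
  exact Finset.sum_congr rfl fun k _ => by ring

lemma vmv_mul_mat (M : Matrix (Fin n) (Fin n) R) (x y : Fin n → R) :
    vecMulVec x y * M = vecMulVec x (y ᵥ* M) := by
  ext p q
  simp only [mul_apply, vecMulVec_apply, vecMul, dotProduct, Finset.mul_sum]
  exact Finset.sum_congr rfl fun k _ => by ring

lemma stdB_eq (i j : Fin n) (c : R) :
    Matrix.single i j c = vecMulVec (Pi.single i (1:R)) (Pi.single j c) := by
  ext p q
  simp only [Matrix.single, of_apply, vecMulVec_apply, Pi.single_apply]
  by_cases h1 : i = p <;> by_cases h2 : j = q <;> simp [h1, h2] <;> aesop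

lemma elemTransv_mem {I : Ideal R} {i j : Fin n} (h : i ≠ j) {c : R} (hc : c ∈ I) :
    elemTransv i j h c ∈ Esub n (I : Set R) :=
  Subgroup.subset_closure ⟨i, j, h, c, hc, rfl⟩

lemma elemTransv_coe {i j : Fin n} (h : i ≠ j) (c : R) :
    (elemTransv i j h c : Matrix (Fin n) (Fin n) R)
      = 1 + vecMulVec (Pi.single i (1:R)) (Pi.single j c) := by
  show Matrix.transvection i j c = _
  rw [Matrix.transvection, stdB_eq]

lemma rowE (I : Ideal R) (m : Fin n) (s : Fin n → R) (hs : s m = 0)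
    (hmem : ∀ p, s p ∈ I) :
    ∃ z ∈ Esub n (I : Set R),
      (z : Matrix (Fin n) (Fin n) R) = 1 + vecMulVec (Pi.single m (1:R)) s := by
  suffices H : ∀ F : Finset (Fin n), ∃ z ∈ Esub n (I : Set R),
      (z : Matrix (Fin n) (Fin n) R)
        = 1 + vecMulVec (Pi.single m (1:R)) (fun p => if p ∈ F then s p else 0) by
    obtain ⟨z, hz, hval⟩ := H Finset.univ
    exact ⟨z, hz, by simpa using hval⟩
  intro F
  induction F using Finset.induction_on with
  | empty =>
      refine ⟨1, one_mem _, ?_⟩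
      have h0 : vecMulVec (Pi.single m (1:R))
          (fun p : Fin n => if p ∈ (∅ : Finset (Fin n)) then s p else 0) = 0 := by
        ext p q; simp [vecMulVec_apply]
      rw [h0, add_zero, Matrix.SpecialLinearGroup.coe_one]
  | @insert q F hq ih =>
      obtain ⟨z, hz, hval⟩ := ih
      by_cases hqm : q = m
      · refine ⟨z, hz, ?_⟩
        rw [hval]
        have hfun : (fun p => if p ∈ insert q F then s p else 0)
            = (fun p => if p ∈ F then s p else 0) := by
          funext p
          by_cases hpm : p = q
          · subst hpm
            have hsp : s p = 0 := by rw [hqm]; exact hs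
            by_cases hpF : p ∈ F <;> simp [hpF, hsp]
          · simp [Finset.mem_insert, hpm]
        rw [hfun]
      · refine ⟨z * elemTransv m q (fun e => hqm e.symm) (s q),
          mul_mem hz (elemTransv_mem _ (hmem q)), ?_⟩
        rw [Matrix.SpecialLinearGroup.coe_mul, hval, elemTransv_coe]
        rw [mul_add, mul_one, add_mul, one_mul, vmv_mul]
        have hdot : (fun p => if p ∈ F then s p else 0) ⬝ᵥ Pi.single m (1:R)
            = 0 := by
          rw [dotProduct_single, mul_one]
          by_cases hmF : m ∈ F <;> simp [hmF, hs]
        rw [hdot, zero_smul, add_zero, add_assoc]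
        congr 1
        have : vecMulVec (Pi.single m (1:R)) (fun p => if p ∈ F then s p else 0)
            + vecMulVec (Pi.single m (1:R)) (Pi.single q (s q))
            = vecMulVec (Pi.single m (1:R))
                ((fun p => if p ∈ F then s p else 0) + Pi.single q (s q)) := by
          ext p r; simp [vecMulVec_apply, mul_add]
        rw [this]
        have hfun : ((fun p => if p ∈ F then s p else 0) + Pi.single q (s q))
            = (fun p => if p ∈ insert q F then s p else 0) := by
          funext p
          by_cases hpq : p = q
          · subst hpq; simp [hq, Pi.single_apply]
          · simp [hpq, Pi.single_apply, Finset.mem_insert]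
        rw [hfun]

lemma colE (I : Ideal R) (m : Fin n) (u : Fin n → R) (hu : u m = 0)
    (hmem : ∀ p, u p ∈ I) :
    ∃ z ∈ Esub n (I : Set R),
      (z : Matrix (Fin n) (Fin n) R) = 1 + vecMulVec u (Pi.single m (1:R)) := by
  suffices H : ∀ F : Finset (Fin n), ∃ z ∈ Esub n (I : Set R),
      (z : Matrix (Fin n) (Fin n) R)
        = 1 + vecMulVec (fun p => if p ∈ F then u p else 0) (Pi.single m (1:R)) by
    obtain ⟨z, hz, hval⟩ := H Finset.univ
    exact ⟨z, hz, by simpa using hval⟩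
  intro F
  induction F using Finset.induction_on with
  | empty =>
      refine ⟨1, one_mem _, ?_⟩
      have h0 : vecMulVec (fun p : Fin n => if p ∈ (∅ : Finset (Fin n)) then u p else 0)
          (Pi.single m (1:R)) = 0 := by
        ext p q; simp [vecMulVec_apply]
      rw [h0, add_zero, Matrix.SpecialLinearGroup.coe_one]
  | @insert q F hq ih =>
      obtain ⟨z, hz, hval⟩ := ih
      by_cases hqm : q = m
      · refine ⟨z, hz, ?_⟩
        rw [hval]
        have hfun : (fun p => if p ∈ insert q F then u p else 0)
            = (fun p => if p ∈ F then u p else 0) := by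
          funext p
          by_cases hpm : p = q
          · subst hpm
            have hup : u p = 0 := by rw [hqm]; exact hu
            by_cases hpF : p ∈ F <;> simp [hpF, hup]
          · simp [Finset.mem_insert, hpm]
        rw [hfun]
      · refine ⟨z * elemTransv q m hqm (u q),
          mul_mem hz (elemTransv_mem _ (hmem q)), ?_⟩
        rw [Matrix.SpecialLinearGroup.coe_mul, hval, elemTransv_coe]
        have hswap : vecMulVec (Pi.single q (1:R)) (Pi.single m (u q))
            = vecMulVec (Pi.single q (u q)) (Pi.single m (1:R)) := by
          ext p r; simp only [vecMulVec_apply, Pi.single_apply]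
          split_ifs <;> ring
        rw [hswap]
        rw [mul_add, mul_one, add_mul, one_mul, vmv_mul]
        have hdot : (Pi.single m (1:R)) ⬝ᵥ (Pi.single q (u q)) = 0 := by
          rw [dotProduct_single, Pi.single_eq_of_ne (fun e => hqm e), zero_mul]
        rw [hdot, zero_smul, add_zero, add_assoc]
        congr 1
        have hadd : vecMulVec (fun p => if p ∈ F then u p else 0) (Pi.single m (1:R))
            + vecMulVec (Pi.single q (u q)) (Pi.single m (1:R))
            = vecMulVec ((fun p => if p ∈ F then u p else 0) + Pi.single q (u q))
                (Pi.single m (1:R)) := by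
          ext p r; simp [vecMulVec_apply, add_mul]
        rw [hadd]
        have hfun : ((fun p => if p ∈ F then u p else 0) + Pi.single q (u q))
            = (fun p => if p ∈ insert q F then u p else 0) := by
          funext p
          by_cases hpq : p = q
          · subst hpq; simp [hq, Pi.single_apply]
          · simp [hpq, Pi.single_apply, Finset.mem_insert]
        rw [hfun]

lemma ring4 {M : Type*} [Ring M] (U S : M) (hU : U*U = 0) (hS : S*S = 0)
    (hSU : S*U = 0) : (1+U)*(1+S)*(1-U)*(1-S) = 1 + U*S := by
  have e1 : (1+U)*(1+S) = 1 + U + S + U*S := by noncomm_ring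
  have h3 : U*S*U = 0 := by rw [mul_assoc, hSU, mul_zero]
  have e2 : (1 + U + S + U*S) * (1 - U) = 1 + S + U*S := by
    have : (1 + U + S + U*S) * U = U := by
      simp only [add_mul, one_mul, hU, hSU, h3, add_zero]
    rw [mul_sub, mul_one, this]; noncomm_ring
  have h4 : U*S*S = 0 := by rw [mul_assoc, hS, mul_zero]
  have e3 : (1 + S + U*S) * (1 - S) = 1 + U*S := by
    have : (1 + S + U*S) * S = S := by
      simp only [add_mul, one_mul, hS, h4, add_zero]
    rw [mul_sub, mul_one, this]; noncomm_ring
  rw [e1, e2, e3]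

lemma keyComm (I : Ideal R) (m : Fin n) (u s : Fin n → R) (hu : u m = 0)
    (hs : s m = 0) (hperp : s ⬝ᵥ u = 0) (humem : ∀ p, u p ∈ I)
    (hsmem : ∀ p, s p ∈ I) :
    ∃ z ∈ Esub n (I : Set R),
      (z : Matrix (Fin n) (Fin n) R) = 1 + vecMulVec u s := by
  obtain ⟨z₁, hz₁, hv₁⟩ := colE I m u hu humem
  obtain ⟨z₂, hz₂, hv₂⟩ := rowE I m s hs hsmem
  set U := vecMulVec u (Pi.single m (1:R)) with hU
  set S := vecMulVec (Pi.single m (1:R)) s with hS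
  have hUU : U * U = 0 := by
    rw [hU, vmv_mul, single_dotProduct, hu, mul_zero, zero_smul]
  have hSS : S * S = 0 := by
    rw [hS, vmv_mul, dotProduct_single, hs, zero_mul, zero_smul]
  have hSU : S * U = 0 := by
    rw [hS, hU, vmv_mul, hperp, zero_smul]
  have hUS : U * S = vecMulVec u s := by
    rw [hU, hS, vmv_mul, single_dotProduct, Pi.single_eq_same, mul_one, one_smul]
  have hinv1 : ((z₁⁻¹ : SL n R) : Matrix (Fin n) (Fin n) R) = 1 - U := by
    have hmul : (z₁ : Matrix (Fin n) (Fin n) R) * (1 - U) = 1 := by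
      rw [hv₁]
      have : (1 + U) * (1 - U) = 1 - U*U := by noncomm_ring
      rw [this, hUU, sub_zero]
    calc ((z₁⁻¹ : SL n R) : Matrix (Fin n) (Fin n) R)
        = (z₁⁻¹ : SL n R).val * ((z₁ : Matrix (Fin n) (Fin n) R) * (1 - U)) := by
          rw [hmul, mul_one]
      _ = ((z₁⁻¹ * z₁ : SL n R) : Matrix (Fin n) (Fin n) R) * (1 - U) := by
          rw [Matrix.SpecialLinearGroup.coe_mul, mul_assoc]
      _ = 1 - U := by
          rw [inv_mul_cancel, Matrix.SpecialLinearGroup.coe_one, one_mul]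
  have hinv2 : ((z₂⁻¹ : SL n R) : Matrix (Fin n) (Fin n) R) = 1 - S := by
    have hmul : (z₂ : Matrix (Fin n) (Fin n) R) * (1 - S) = 1 := by
      rw [hv₂]
      have : (1 + S) * (1 - S) = 1 - S*S := by noncomm_ring
      rw [this, hSS, sub_zero]
    calc ((z₂⁻¹ : SL n R) : Matrix (Fin n) (Fin n) R)
        = (z₂⁻¹ : SL n R).val * ((z₂ : Matrix (Fin n) (Fin n) R) * (1 - S)) := by
          rw [hmul, mul_one]
      _ = ((z₂⁻¹ * z₂ : SL n R) : Matrix (Fin n) (Fin n) R) * (1 - S) := by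
          rw [Matrix.SpecialLinearGroup.coe_mul, mul_assoc]
      _ = 1 - S := by
          rw [inv_mul_cancel, Matrix.SpecialLinearGroup.coe_one, one_mul]
  refine ⟨z₁ * z₂ * z₁⁻¹ * z₂⁻¹,
    mul_mem (mul_mem (mul_mem hz₁ hz₂) (inv_mem hz₁)) (inv_mem hz₂), ?_⟩
  rw [Matrix.SpecialLinearGroup.coe_mul, Matrix.SpecialLinearGroup.coe_mul,
    Matrix.SpecialLinearGroup.coe_mul, hv₁, hv₂, hinv1, hinv2, ← hUS]
  exact ring4 U S hUU hSS hSU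

lemma exists_third (hn : 3 ≤ n) (k l : Fin n) : ∃ m : Fin n, m ≠ k ∧ m ≠ l := by
  by_contra h
  push_neg at h
  have hsub : (Finset.univ : Finset (Fin n)) ⊆ {k, l} := by
    intro x _
    rcases eq_or_ne x k with rfl | hx
    · simp
    · simp [h x hx]
  have h1 : (Finset.univ : Finset (Fin n)).card ≤ ({k, l} : Finset (Fin n)).card :=
    Finset.card_le_card hsub
  have h2 : ({k, l} : Finset (Fin n)).card ≤ 2 :=
    (Finset.card_insert_le _ _).trans (by simp)
  rw [Finset.card_univ, Fintype.card_fin] at h1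
  omega

lemma pairSupp (I : Ideal R) (hn : 3 ≤ n) (k l : Fin n) (u t : Fin n → R)
    (hsupp : ∀ p, p ≠ k → p ≠ l → t p = 0) (hperp : t ⬝ᵥ u = 0)
    (humem : ∀ p, u p ∈ I) (htmem : ∀ p, t p ∈ I) :
    ∃ z ∈ Esub n (I : Set R),
      (z : Matrix (Fin n) (Fin n) R) = 1 + vecMulVec u t := by
  obtain ⟨m, hmk, hml⟩ := exists_third hn k l
  have htm : t m = 0 := hsupp m hmk hml
  set u' : Fin n → R := Function.update u m 0 with hu'
  have hu'm : u' m = 0 := Function.update_self m 0 u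
  have hperp' : t ⬝ᵥ u' = 0 := by
    have heq : ∀ p, t p * u' p = t p * u p := by
      intro p
      by_cases hpm : p = m
      · subst hpm; rw [htm, zero_mul, zero_mul]
      · rw [hu', Function.update_of_ne hpm]
    calc t ⬝ᵥ u' = t ⬝ᵥ u := Finset.sum_congr rfl fun p _ => heq p
      _ = 0 := hperp
  have hu'mem : ∀ p, u' p ∈ I := by
    intro p
    by_cases hpm : p = m
    · subst hpm; rw [hu'm]; exact I.zero_mem
    · rw [hu', Function.update_of_ne hpm]; exact humem p
  obtain ⟨z₁, hz₁, hv₁⟩ := keyComm I m u' t hu'm htm hperp' hu'mem htmem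
  obtain ⟨z₂, hz₂, hv₂⟩ := rowE I m (fun p => u m * t p)
    (by show u m * t m = 0; rw [htm, mul_zero]) (fun p => I.mul_mem_left _ (htmem p))
  refine ⟨z₁ * z₂, mul_mem hz₁ hz₂, ?_⟩
  rw [Matrix.SpecialLinearGroup.coe_mul, hv₁, hv₂]
  rw [mul_add, mul_one, add_mul, one_mul, vmv_mul]
  have hdot : t ⬝ᵥ Pi.single m (1:R) = 0 := by
    rw [dotProduct_single, htm, zero_mul]
  rw [hdot, zero_smul, add_zero, add_assoc]
  congr 1
  ext p r
  simp only [Matrix.add_apply, vecMulVec_apply, Pi.single_apply]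
  by_cases hpm : p = m
  · subst hpm
    rw [hu'm]
    simp
  · rw [hu', Function.update_of_ne hpm]
    simp [hpm]

lemma sumMem (I : Ideal R) {ι : Type*} [DecidableEq ι] (u : Fin n → R)
    (t : ι → Fin n → R) (F : Finset ι)
    (hperp : ∀ i ∈ F, t i ⬝ᵥ u = 0)
    (hex : ∀ i ∈ F, ∃ z ∈ Esub n (I : Set R),
      (z : Matrix (Fin n) (Fin n) R) = 1 + vecMulVec u (t i)) :
    ∃ z ∈ Esub n (I : Set R),
      (z : Matrix (Fin n) (Fin n) R) = 1 + vecMulVec u (∑ i ∈ F, t i) := by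
  induction F using Finset.induction_on with
  | empty =>
      refine ⟨1, one_mem _, ?_⟩
      have h0 : vecMulVec u (∑ i ∈ (∅ : Finset ι), t i) = 0 := by
        ext p r; simp [vecMulVec_apply]
      rw [h0, add_zero, Matrix.SpecialLinearGroup.coe_one]
  | @insert i F hi ih =>
      obtain ⟨z₁, hz₁, hv₁⟩ := hex i (Finset.mem_insert_self i F)
      obtain ⟨z₂, hz₂, hv₂⟩ := ih
        (fun j hj => hperp j (Finset.mem_insert_of_mem hj))
        (fun j hj => hex j (Finset.mem_insert_of_mem hj))
      refine ⟨z₁ * z₂, mul_mem hz₁ hz₂, ?_⟩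
      rw [Matrix.SpecialLinearGroup.coe_mul, hv₁, hv₂]
      rw [mul_add, mul_one, add_mul, one_mul, vmv_mul,
        hperp i (Finset.mem_insert_self i F), zero_smul, add_zero, add_assoc]
      congr 1
      have hadd : vecMulVec u (t i) + vecMulVec u (∑ j ∈ F, t j)
          = vecMulVec u (t i + ∑ j ∈ F, t j) := by
        ext p r; simp [vecMulVec_apply, mul_add]
      rw [hadd, Finset.sum_insert hi]

lemma suslin (hn : 3 ≤ n) (a b : Ideal R) (v q w : Fin n → R) (ξ : R)
    (hξ : ξ ∈ a) (hw : ∀ p, w p ∈ b) (hqv : q ⬝ᵥ v = 1) (hwv : w ⬝ᵥ v = 0) :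
    ∃ z ∈ Esub n ((a + b : Ideal R) : Set R),
      (z : Matrix (Fin n) (Fin n) R) = 1 + vecMulVec (ξ • v) w := by
  set I : Ideal R := a + b with hI
  set t : Fin n × Fin n → Fin n → R := fun kl =>
    (q kl.1 * w kl.2) •
      (v kl.1 • (Pi.single kl.2 (1:R) : Fin n → R)
        - v kl.2 • (Pi.single kl.1 (1:R) : Fin n → R))
    with ht
  have hperp : ∀ kl : Fin n × Fin n, t kl ⬝ᵥ v = 0 := by
    intro kl
    simp only [ht, smul_dotProduct, sub_dotProduct, single_dotProduct, smul_eq_mul]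
    ring
  have hperpξ : ∀ kl : Fin n × Fin n, t kl ⬝ᵥ (ξ • v) = 0 := by
    intro kl
    rw [dotProduct_smul, hperp kl, smul_zero]
  have hsum : ∑ kl : Fin n × Fin n, t kl = w := by
    funext p
    rw [Finset.sum_apply, Fintype.sum_prod_type]
    have hterm : ∀ k l : Fin n, t (k, l) p
        = (q k * v k) * (w l * (Pi.single l (1:R) : Fin n → R) p)
          - (q k * (Pi.single k (1:R) : Fin n → R) p) * (w l * v l) := by
      intro k l
      simp only [ht, Pi.smul_apply, Pi.sub_apply, smul_eq_mul]
      ring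
    calc ∑ k : Fin n, ∑ l : Fin n, t (k, l) p
        = ∑ k : Fin n, ∑ l : Fin n, ((q k * v k) * (w l * (Pi.single l (1:R) : Fin n → R) p)
            - (q k * (Pi.single k (1:R) : Fin n → R) p) * (w l * v l)) :=
          Finset.sum_congr rfl fun k _ => Finset.sum_congr rfl fun l _ => hterm k l
      _ = ∑ k : Fin n, ((q k * v k) * (∑ l : Fin n, w l * (Pi.single l (1:R) : Fin n → R) p)
            - (q k * (Pi.single k (1:R) : Fin n → R) p) * (∑ l : Fin n, w l * v l)) := by
          refine Finset.sum_congr rfl fun k _ => ?_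
          rw [Finset.sum_sub_distrib, Finset.mul_sum, Finset.mul_sum]
      _ = ∑ k : Fin n, (q k * v k) * w p := by
          refine Finset.sum_congr rfl fun k _ => ?_
          have h1 : ∑ l : Fin n, w l * (Pi.single l (1:R) : Fin n → R) p = w p := by
            simp [Pi.single_apply, mul_ite, mul_one, mul_zero, Finset.sum_ite_eq]
          have h2 : (∑ l : Fin n, w l * v l) = 0 := hwv
          rw [h1, h2, mul_zero, sub_zero]
      _ = (∑ k : Fin n, q k * v k) * w p := by rw [← Finset.sum_mul]
      _ = w p := by
          have : (∑ k : Fin n, q k * v k) = 1 := hqv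
          rw [this, one_mul]
  have hex : ∀ kl : Fin n × Fin n, ∃ z ∈ Esub n (I : Set R),
      (z : Matrix (Fin n) (Fin n) R) = 1 + vecMulVec (ξ • v) (t kl) := by
    rintro ⟨k, l⟩
    apply pairSupp I hn k l (ξ • v) (t (k, l))
    · intro p hpk hpl
      simp [ht, Pi.single_eq_of_ne hpl, Pi.single_eq_of_ne hpk]
    · exact hperpξ (k, l)
    · intro p
      have : ξ * v p ∈ a := a.mul_mem_right _ hξ
      rw [hI]
      exact Ideal.mem_sup_left this
    · intro p
      have hb : (q k * w l) * ((v k • (Pi.single l (1:R) : Fin n → R)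
          - v l • (Pi.single k (1:R) : Fin n → R)) p) ∈ b :=
        b.mul_mem_right _ (b.mul_mem_left _ (hw l))
      rw [hI]
      exact Ideal.mem_sup_right hb
  obtain ⟨z, hz, hv⟩ := sumMem I (ξ • v) t Finset.univ
    (fun kl _ => hperpξ kl) (fun kl _ => hex kl)
  exact ⟨z, hz, by rw [hv, hsum]⟩

lemma conj_mem (hn : 3 ≤ n) (a b : Ideal R) (g : SL n R) {i j : Fin n}
    (h : i ≠ j) {ξ η : R} (hξ : ξ ∈ a) (hη : η ∈ b) :
    g * elemTransv i j h (ξ * η) * g⁻¹ ∈ Esub n ((a + b : Ideal R) : Set R) := by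
  have hGiG : ((g⁻¹ : SL n R) : Matrix (Fin n) (Fin n) R) * (g : Matrix (Fin n) (Fin n) R)
      = 1 := by
    rw [← Matrix.SpecialLinearGroup.coe_mul, inv_mul_cancel,
      Matrix.SpecialLinearGroup.coe_one]
  have hGGi : (g : Matrix (Fin n) (Fin n) R) * ((g⁻¹ : SL n R) : Matrix (Fin n) (Fin n) R)
      = 1 := by
    rw [← Matrix.SpecialLinearGroup.coe_mul, mul_inv_cancel,
      Matrix.SpecialLinearGroup.coe_one]
  set v : Fin n → R := fun p => (g : Matrix (Fin n) (Fin n) R) p i with hv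
  set qq : Fin n → R := fun p => ((g⁻¹ : SL n R) : Matrix (Fin n) (Fin n) R) i p with hqq
  set w : Fin n → R := fun p => η * ((g⁻¹ : SL n R) : Matrix (Fin n) (Fin n) R) j p with hw
  have hqv : qq ⬝ᵥ v = 1 := by
    have h1 : qq ⬝ᵥ v = (((g⁻¹ : SL n R) : Matrix (Fin n) (Fin n) R)
        * (g : Matrix (Fin n) (Fin n) R)) i i := by
      rw [Matrix.mul_apply]; rfl
    rw [h1, hGiG, Matrix.one_apply_eq]
  have hwv : w ⬝ᵥ v = 0 := by
    have h1 : w ⬝ᵥ v = η * ((((g⁻¹ : SL n R) : Matrix (Fin n) (Fin n) R)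
        * (g : Matrix (Fin n) (Fin n) R)) j i) := by
      rw [Matrix.mul_apply, dotProduct, Finset.mul_sum]
      exact Finset.sum_congr rfl fun p _ => by rw [hw]; ring
    rw [h1, hGiG, Matrix.one_apply_ne (Ne.symm h), mul_zero]
  obtain ⟨z, hz, hzv⟩ := suslin hn a b v qq w ξ hξ
    (fun p => b.mul_mem_right _ hη) hqv hwv
  suffices heq : g * elemTransv i j h (ξ * η) * g⁻¹ = z by rw [heq]; exact hz
  apply Subtype.ext
  rw [hzv, Matrix.SpecialLinearGroup.coe_mul, Matrix.SpecialLinearGroup.coe_mul,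
    elemTransv_coe]
  rw [mul_add, mul_one, add_mul, hGGi]
  congr 1
  rw [mul_vmv, vmv_mul_mat, mulVec_single, single_vecMul]
  ext p r
  simp only [vecMulVec_apply, Pi.smul_apply, smul_eq_mul, hv, hw, MulOpposite.op_one, one_smul,
    Matrix.col, Matrix.row, Matrix.transpose_apply]
  ring

end RelEAux

/-- For a commutative ring `R`, `n ≥ 3` and ideals `𝔞, 𝔟 ⊴ R`,
`E(n,R,𝔞𝔟) ≤ E(n,𝔞+𝔟)`. -/
theorem relE_mul_le_Esub_add
    {R : Type*} [CommRing R] (n : ℕ) (hn : 3 ≤ n) (a b : Ideal R) :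
    relE n (a * b) ≤ Esub n ((a + b : Ideal R) : Set R) := by
  rw [relE, relESet]
  apply (Subgroup.closure_le _).2
  rintro x ⟨g, hg, y, ⟨i, j, hij, c, hc, rfl⟩, rfl⟩
  show g * elemTransv i j hij c * g⁻¹ ∈ Esub n ((a + b : Ideal R) : Set R)
  have hc' : c ∈ a * b := hc
  refine Submodule.mul_induction_on hc' ?_ ?_
  · intro ξ hξ η hη
    exact conj_mem hn a b g hij hξ hη
  · intro x y hx hy
    have hsplit : elemTransv i j hij (x + y)
        = elemTransv i j hij x * elemTransv i j hij y := by
      apply Subtype.ext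
      show Matrix.transvection i j (x + y) = _
      rw [Matrix.SpecialLinearGroup.coe_mul]
      exact (Matrix.transvection_mul_transvection_same i j hij x y).symm
    rw [hsplit]
    have hfac : g * (elemTransv i j hij x * elemTransv i j hij y) * g⁻¹
        = (g * elemTransv i j hij x * g⁻¹) * (g * elemTransv i j hij y * g⁻¹) := by
      group
    rw [hfac]
    exact mul_mem hx hy
end

section
/- Let R be a commutative ring, n ≥ 3 a natural number, and let 𝔞 be an ideal of R. Then E(n,R,𝔞²) ≤ E(n,𝔞): the relative elementary subgroup of level 𝔞² is contained in the subgroup generated by elementary transvections with parameters in 𝔞. (Type A_{n−1} instance of the Tits–Stein lemma: for Φ ≠ C_l, E(Φ,𝔞) ≥ E(Φ,R,𝔞²).) -/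
open Matrix

namespace TS

variable {R : Type*} [CommRing R] {n : ℕ}

lemma et_coe {i j : Fin n} (hij : i ≠ j) (a : R) :
    (↑(elemTransv i j hij a) : Matrix (Fin n) (Fin n) R) = Matrix.transvection i j a := rfl

lemma et_mul_same {i j : Fin n} (hij : i ≠ j) (a b : R) :
    elemTransv i j hij a * elemTransv i j hij b = elemTransv i j hij (a + b) := by
  apply Subtype.ext
  simp only [Matrix.SpecialLinearGroup.coe_mul, et_coe]
  rw [Matrix.transvection_mul_transvection_same _ _ hij]

lemma et_zero {i j : Fin n} (hij : i ≠ j) : elemTransv i j hij (0 : R) = 1 := by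
  apply Subtype.ext
  simp [et_coe]

lemma et_inv {i j : Fin n} (hij : i ≠ j) (a : R) :
    (elemTransv i j hij a)⁻¹ = elemTransv i j hij (-a) :=
  inv_eq_of_mul_eq_one_right (by rw [et_mul_same, add_neg_cancel, et_zero])

/-- Commuting elementary transvections. -/
lemma et_comm' {i j k l : Fin n} (hij : i ≠ j) (hkl : k ≠ l) (hjk : j ≠ k) (hli : l ≠ i)
    (a b : R) :
    elemTransv i j hij a * elemTransv k l hkl b
      = elemTransv k l hkl b * elemTransv i j hij a := by
  apply Subtype.ext
  simp only [Matrix.SpecialLinearGroup.coe_mul, et_coe]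
  simp [Matrix.transvection, Matrix.add_mul, Matrix.mul_add,
    Matrix.single_mul_single_of_ne, hjk, hli]
  abel

/-- Steinberg relation: `e_ij(a) e_jk(b) = e_ik(ab) e_jk(b) e_ij(a)` for distinct `i j k`. -/
lemma et_steinberg {i j k : Fin n} (hij : i ≠ j) (hjk : j ≠ k) (hik : i ≠ k) (a b : R) :
    elemTransv i j hij a * elemTransv j k hjk b
      = elemTransv i k hik (a * b) * (elemTransv j k hjk b * elemTransv i j hij a) := by
  apply Subtype.ext
  simp only [Matrix.SpecialLinearGroup.coe_mul, et_coe]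
  simp [Matrix.transvection, Matrix.add_mul, Matrix.mul_add,
    Matrix.single_mul_single_of_ne, hjk.symm, hik.symm]
  abel

/-- conjugation form 1: `e_ij(a) e_jk(b) e_ij(a)⁻¹ = e_ik(ab) e_jk(b)`. -/
lemma et_conj1 {i j k : Fin n} (hij : i ≠ j) (hjk : j ≠ k) (hik : i ≠ k) (a b : R) :
    elemTransv i j hij a * elemTransv j k hjk b * (elemTransv i j hij a)⁻¹
      = elemTransv i k hik (a * b) * elemTransv j k hjk b := by
  rw [et_steinberg hij hjk hik]
  group

/-- conjugation form 2: `e_jk(b) e_ij(a) e_jk(b)⁻¹ = e_ik(-(ab)) e_ij(a)`. -/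
lemma et_conj2 {i j k : Fin n} (hij : i ≠ j) (hjk : j ≠ k) (hik : i ≠ k) (a b : R) :
    elemTransv j k hjk b * elemTransv i j hij a * (elemTransv j k hjk b)⁻¹
      = elemTransv i k hik (-(a * b)) * elemTransv i j hij a := by
  have h : elemTransv j k hjk b * elemTransv i j hij a
      = elemTransv i k hik (-(a*b)) * (elemTransv i j hij a * elemTransv j k hjk b) := by
    rw [et_steinberg hij hjk hik, ← mul_assoc, ← mul_assoc, et_mul_same, neg_add_cancel, et_zero,
      one_mul]
  rw [h]
  group

/-- conjugation of a commuting pair. -/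
lemma et_conj_comm {i j k l : Fin n} (hij : i ≠ j) (hkl : k ≠ l) (hjk : j ≠ k) (hli : l ≠ i)
    (a b : R) :
    elemTransv i j hij a * elemTransv k l hkl b * (elemTransv i j hij a)⁻¹
      = elemTransv k l hkl b := by
  rw [et_comm' hij hkl hjk hli]
  group

/-- commutator formula: `e_ik(ab) = [e_ij(a), e_jk(b)]`. -/
lemma et_comm_decomp {i j k : Fin n} (hij : i ≠ j) (hjk : j ≠ k) (hik : i ≠ k) (a b : R) :
    elemTransv i k hik (a * b)
      = elemTransv i j hij a * elemTransv j k hjk b * (elemTransv i j hij a)⁻¹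
          * (elemTransv j k hjk b)⁻¹ := by
  rw [et_conj1 hij hjk hik]
  group

/- ### group-identity helpers -/

section GroupId
variable {G : Type*} [Group G]

lemma conj_mul' (g x y : G) : g * (x * y) * g⁻¹ = (g * x * g⁻¹) * (g * y * g⁻¹) := by group

lemma conj_conj (g v e : G) :
    g * (v * e * v⁻¹) * g⁻¹ = (g * v * g⁻¹) * (g * e * g⁻¹) * (g * v * g⁻¹)⁻¹ := by group

lemma conj_commutator (g x y : G) :
    g * (x * y * x⁻¹ * y⁻¹) * g⁻¹
      = (g * x * g⁻¹) * (g * y * g⁻¹) * (g * x * g⁻¹)⁻¹ * (g * y * g⁻¹)⁻¹ := by group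

lemma commutator_mul_right (A b c : G) :
    A * (b * c) * A⁻¹ * (b * c)⁻¹
      = (A * b * A⁻¹ * b⁻¹) * (b * (A * c * A⁻¹ * c⁻¹) * b⁻¹) := by group

lemma commutator_mul_left (x y B : G) :
    (x * y) * B * (x * y)⁻¹ * B⁻¹
      = x * (y * B * y⁻¹ * B⁻¹) * x⁻¹ * (x * B * x⁻¹ * B⁻¹) := by group

lemma regroup_conj (v x e : G) : (v * x) * e * (v * x)⁻¹ = v * (x * e * x⁻¹) * v⁻¹ := by group

end GroupId

/- ### the auxiliary subgroup `F` -/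

variable (a : Ideal R)

/-- Generators: `z_{pq}(y,c) = e_qp(c) e_pq(y) e_qp(c)⁻¹` with `y ∈ a²`. -/
def Zgen : Set (SL n R) :=
  { x | ∃ (p q : Fin n) (hpq : p ≠ q) (c y : R), y ∈ a ^ 2 ∧
      x = elemTransv q p hpq.symm c * elemTransv p q hpq y * (elemTransv q p hpq.symm c)⁻¹ }

def Fgrp : Subgroup (SL n R) := Subgroup.closure (Zgen (n := n) a)

lemma mem_F_z {p q : Fin n} (hpq : p ≠ q) {y : R} (hy : y ∈ a ^ 2) (c : R) :
    elemTransv q p hpq.symm c * elemTransv p q hpq y * (elemTransv q p hpq.symm c)⁻¹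
      ∈ Fgrp (n := n) a :=
  Subgroup.subset_closure ⟨p, q, hpq, c, y, hy, rfl⟩

lemma mem_F_e {p q : Fin n} (hpq : p ≠ q) {y : R} (hy : y ∈ a ^ 2) :
    elemTransv p q hpq y ∈ Fgrp (n := n) a := by
  have h := mem_F_z a hpq hy 0
  rw [et_zero] at h
  simpa using h

/-- single-column sublemma. -/
lemma Lsub {p q h : Fin n} (hpq : p ≠ q) (hph : p ≠ h) (hqh : q ≠ h)
    {α : R} (hα : α ∈ a ^ 2) (γ δ : R) :
    elemTransv p h hph α * (elemTransv h p hph.symm γ * elemTransv h q hqh.symm δ)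
        * (elemTransv p h hph α)⁻¹
        * (elemTransv h p hph.symm γ * elemTransv h q hqh.symm δ)⁻¹ ∈ Fgrp (n := n) a := by
  rw [commutator_mul_right]
  apply mul_mem
  · -- [e_ph(α), e_hp(γ)] = e_ph(α) * (e_hp(γ) e_ph(-α) e_hp(γ)⁻¹)
    have h1 : elemTransv p h hph α * elemTransv h p hph.symm γ * (elemTransv p h hph α)⁻¹
          * (elemTransv h p hph.symm γ)⁻¹
        = elemTransv p h hph α *
            (elemTransv h p hph.symm γ * elemTransv p h hph (-α)
              * (elemTransv h p hph.symm γ)⁻¹) := by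
      rw [et_inv]; group
    rw [h1]
    exact mul_mem (mem_F_e a hph hα) (mem_F_z a hph (neg_mem hα) γ)
  · -- e_hp(γ) * [e_ph(α), e_hq(δ)] * e_hp(γ)⁻¹
    have h2 : elemTransv p h hph α * elemTransv h q hqh.symm δ * (elemTransv p h hph α)⁻¹
          * (elemTransv h q hqh.symm δ)⁻¹ = elemTransv p q hpq (α * δ) :=
      (et_comm_decomp hph hqh.symm hpq α δ).symm
    rw [h2, et_conj1 hph.symm hpq hqh.symm]
    exact mul_mem (mem_F_e a hqh.symm (Ideal.mul_mem_left _ γ (Ideal.mul_mem_right δ _ hα)))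
      (mem_F_e a hpq (Ideal.mul_mem_right δ _ hα))

/-- two-column lemma (Lemma C, restricted form). -/
lemma LC {p q h : Fin n} (hpq : p ≠ q) (hph : p ≠ h) (hqh : q ≠ h)
    {α β : R} (hα : α ∈ a ^ 2) (hβ : β ∈ a ^ 2) (γ δ : R) :
    (elemTransv q h hqh β * elemTransv p h hph α)
        * (elemTransv h p hph.symm γ * elemTransv h q hqh.symm δ)
        * (elemTransv q h hqh β * elemTransv p h hph α)⁻¹
        * (elemTransv h p hph.symm γ * elemTransv h q hqh.symm δ)⁻¹ ∈ Fgrp (n := n) a := by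
  rw [commutator_mul_left]
  apply mul_mem
  · exact mul_mem (mul_mem (mem_F_e a hqh hβ) (Lsub a hpq hph hqh hα γ δ))
      (inv_mem (mem_F_e a hqh hβ))
  · have hswap : elemTransv h p hph.symm γ * elemTransv h q hqh.symm δ
        = elemTransv h q hqh.symm δ * elemTransv h p hph.symm γ :=
      et_comm' hph.symm hqh.symm hph hqh γ δ
    rw [hswap]
    exact Lsub a hpq.symm hqh hph hβ δ γ


/-- a third index exists when `3 ≤ n`. -/
lemma exists_third (hn : 3 ≤ n) (p q : Fin n) : ∃ h : Fin n, h ≠ p ∧ h ≠ q := by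
  by_contra hc
  push_neg at hc
  have hsub : (Finset.univ : Finset (Fin n)) ⊆ {p, q} := by
    intro x _
    by_cases hxp : x = p
    · simp [hxp]
    · simp [hc x hxp]
  have hcard := Finset.card_le_card hsub
  have h2 : ({p, q} : Finset (Fin n)).card ≤ 2 := by
    refine le_trans (Finset.card_insert_le _ _) ?_
    simp
  simp [Finset.card_univ] at hcard
  omega

lemma memE {i j : Fin n} (hij : i ≠ j) {x : R} (hx : x ∈ a) :
    elemTransv i j hij x ∈ Esub n (a : Set R) :=
  Subgroup.subset_closure ⟨i, j, hij, x, hx, rfl⟩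

/-- the generators of `F` lie in `E(n, a)`. -/
lemma z_mem_Esub (hn : 3 ≤ n) {p q : Fin n} (hpq : p ≠ q) {y : R} (hy : y ∈ a ^ 2) (c : R) :
    elemTransv q p hpq.symm c * elemTransv p q hpq y * (elemTransv q p hpq.symm c)⁻¹
      ∈ Esub n (a : Set R) := by
  rw [pow_two] at hy
  refine Submodule.mul_induction_on
    (C := fun z => elemTransv q p hpq.symm c * elemTransv p q hpq z
      * (elemTransv q p hpq.symm c)⁻¹ ∈ Esub n (a : Set R)) hy
    (fun s hs t ht => ?_) (fun x y ihx ihy => ?_)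
  ·
    obtain ⟨h, hhp, hhq⟩ := exists_third hn p q
    have e1 : elemTransv p q hpq (s * t)
        = elemTransv p h hhp.symm s * elemTransv h q hhq t * (elemTransv p h hhp.symm s)⁻¹
            * (elemTransv h q hhq t)⁻¹ :=
      et_comm_decomp hhp.symm hhq hpq s t
    rw [e1, conj_commutator, et_conj1 hpq.symm hhp.symm hhq.symm c s,
      et_conj2 hhq hpq.symm hhp t c]
    refine mul_mem (mul_mem (mul_mem ?_ ?_) (inv_mem ?_)) (inv_mem ?_)
    · exact mul_mem (memE a _ (Ideal.mul_mem_left _ c hs)) (memE a _ hs)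
    · exact mul_mem (memE a _ (neg_mem (Ideal.mul_mem_right c _ ht))) (memE a _ ht)
    · exact mul_mem (memE a _ (Ideal.mul_mem_left _ c hs)) (memE a _ hs)
    · exact mul_mem (memE a _ (neg_mem (Ideal.mul_mem_right c _ ht))) (memE a _ ht)
  · rw [← et_mul_same, conj_mul']
    exact mul_mem ihx ihy

section Cases

variable {p q k l : Fin n}

/-- conjugation by `e_qp(r)`. -/
lemma caseA (hpq : p ≠ q) {y : R} (hy : y ∈ a ^ 2) (r c : R) :
    elemTransv q p hpq.symm r *
        (elemTransv q p hpq.symm c * elemTransv p q hpq y * (elemTransv q p hpq.symm c)⁻¹) *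
        (elemTransv q p hpq.symm r)⁻¹ ∈ Fgrp (n := n) a := by
  have key : elemTransv q p hpq.symm r *
      (elemTransv q p hpq.symm c * elemTransv p q hpq y * (elemTransv q p hpq.symm c)⁻¹) *
      (elemTransv q p hpq.symm r)⁻¹
      = (elemTransv q p hpq.symm r * elemTransv q p hpq.symm c) * elemTransv p q hpq y *
        (elemTransv q p hpq.symm r * elemTransv q p hpq.symm c)⁻¹ := by group
  rw [key, et_mul_same hpq.symm r c]
  exact mem_F_z a hpq hy (r + c)

/-- the hard case: conjugation by `e_pq(r)`. -/
lemma caseB (hn : 3 ≤ n) (hpq : p ≠ q) {y : R} (hy : y ∈ a ^ 2) (r c : R) :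
    elemTransv p q hpq r *
        (elemTransv q p hpq.symm c * elemTransv p q hpq y * (elemTransv q p hpq.symm c)⁻¹) *
        (elemTransv p q hpq r)⁻¹ ∈ Fgrp (n := n) a := by
  obtain ⟨h, hhp, hhq⟩ := exists_third hn p q
  have e1 : elemTransv p q hpq y
      = elemTransv p h hhp.symm y * elemTransv h q hhq 1 * (elemTransv p h hhp.symm y)⁻¹
          * (elemTransv h q hhq 1)⁻¹ := by
    have := et_comm_decomp hhp.symm hhq hpq y 1
    rwa [mul_one] at this
  rw [e1, conj_commutator (elemTransv q p hpq.symm c),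
    et_conj1 hpq.symm hhp.symm hhq.symm c y,
    et_conj2 hhq hpq.symm hhp 1 c,
    conj_commutator (elemTransv p q hpq r),
    conj_mul' (elemTransv p q hpq r),
    conj_mul' (elemTransv p q hpq r),
    et_conj1 hpq hhq.symm hhp.symm r (c * y),
    et_conj_comm hpq hhp.symm hpq.symm hhp r y,
    et_conj2 hhp hpq hhq (-(1 * c)) r,
    et_conj_comm hpq hhq hhq.symm hpq.symm r 1]
  have hA : (elemTransv p h hhp.symm (r * (c * y)) * elemTransv q h hhq.symm (c * y))
        * elemTransv p h hhp.symm y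
      = elemTransv q h hhq.symm (c * y) * elemTransv p h hhp.symm (r * (c * y) + y) := by
    rw [et_comm' hhp.symm hhq.symm hhq hhp, mul_assoc, et_mul_same]
  have hB : (elemTransv h q hhq (-(-(1 * c) * r)) * elemTransv h p hhp (-(1 * c)))
        * elemTransv h q hhq 1
      = elemTransv h p hhp (-(1 * c)) * elemTransv h q hhq (-(-(1 * c) * r) + 1) := by
    rw [et_comm' hhq hhp hhq.symm hhp.symm, mul_assoc, et_mul_same]
  rw [hA, hB]
  refine LC a hpq hhp.symm hhq.symm ?_ ?_ (-(1 * c)) (-(-(1 * c) * r) + 1)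
  · exact add_mem (Ideal.mul_mem_left _ r (Ideal.mul_mem_left _ c hy)) hy
  · exact Ideal.mul_mem_left _ c hy

/-- conjugation by `e_ql(r)`, `l ∉ {p,q}`. -/
lemma case3 (hpq : p ≠ q) (hql : q ≠ l) (hpl : p ≠ l) {y : R} (hy : y ∈ a ^ 2) (r c : R) :
    elemTransv q l hql r *
        (elemTransv q p hpq.symm c * elemTransv p q hpq y * (elemTransv q p hpq.symm c)⁻¹) *
        (elemTransv q l hql r)⁻¹ ∈ Fgrp (n := n) a := by
  rw [conj_conj, et_conj_comm hql hpq.symm hql.symm hpq r c,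
    et_conj2 hpq hql hpl y r, conj_mul',
    et_conj1 hpq.symm hpl hql c (-(y * r))]
  refine mul_mem (mul_mem (mem_F_e a hql ?_) (mem_F_e a hpl ?_)) (mem_F_z a hpq hy c)
  · exact Ideal.mul_mem_left _ c (neg_mem (Ideal.mul_mem_right r _ hy))
  · exact neg_mem (Ideal.mul_mem_right r _ hy)

/-- conjugation by `e_pl(r)`, `l ∉ {p,q}`. -/
lemma case4 (hpq : p ≠ q) (hpl : p ≠ l) (hql : q ≠ l) {y : R} (hy : y ∈ a ^ 2) (r c : R) :
    elemTransv p l hpl r *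
        (elemTransv q p hpq.symm c * elemTransv p q hpq y * (elemTransv q p hpq.symm c)⁻¹) *
        (elemTransv p l hpl r)⁻¹ ∈ Fgrp (n := n) a := by
  rw [conj_conj, et_conj2 hpq.symm hpl hql c r,
    et_conj_comm hpl hpq hpl.symm hpq.symm r y]
  have hc : elemTransv q l hql (-(c * r)) * elemTransv q p hpq.symm c
      = elemTransv q p hpq.symm c * elemTransv q l hql (-(c * r)) :=
    et_comm' hql hpq.symm hql.symm hpq (-(c * r)) c
  rw [hc, regroup_conj, et_conj2 hpq hql hpl y (-(c * r)), conj_mul',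
    et_conj1 hpq.symm hpl hql c (-(y * -(c * r)))]
  refine mul_mem (mul_mem (mem_F_e a hql ?_) (mem_F_e a hpl ?_)) (mem_F_z a hpq hy c)
  · exact Ideal.mul_mem_left _ c (neg_mem (Ideal.mul_mem_right _ _ hy))
  · exact neg_mem (Ideal.mul_mem_right _ _ hy)

/-- conjugation by `e_kq(r)`, `k ∉ {p,q}`. -/
lemma case5 (hpq : p ≠ q) (hkq : k ≠ q) (hkp : k ≠ p) {y : R} (hy : y ∈ a ^ 2) (r c : R) :
    elemTransv k q hkq r *
        (elemTransv q p hpq.symm c * elemTransv p q hpq y * (elemTransv q p hpq.symm c)⁻¹) *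
        (elemTransv k q hkq r)⁻¹ ∈ Fgrp (n := n) a := by
  rw [conj_conj, et_conj1 hkq hpq.symm hkp r c,
    et_conj_comm hkq hpq hpq.symm hkq.symm r y]
  have hc : elemTransv k p hkp (r * c) * elemTransv q p hpq.symm c
      = elemTransv q p hpq.symm c * elemTransv k p hkp (r * c) :=
    et_comm' hkp hpq.symm hpq hkp.symm (r * c) c
  rw [hc, regroup_conj, et_conj1 hkp hpq hkq (r * c) y, conj_mul',
    et_conj2 hkq hpq.symm hkp ((r * c) * y) c]
  refine mul_mem (mul_mem (mem_F_e a hkp ?_) (mem_F_e a hkq ?_)) (mem_F_z a hpq hy c)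
  · exact neg_mem (Ideal.mul_mem_right _ _ (Ideal.mul_mem_left _ _ hy))
  · exact Ideal.mul_mem_left _ _ hy

/-- conjugation by `e_kp(r)`, `k ∉ {p,q}`. -/
lemma case6 (hpq : p ≠ q) (hkp : k ≠ p) (hkq : k ≠ q) {y : R} (hy : y ∈ a ^ 2) (r c : R) :
    elemTransv k p hkp r *
        (elemTransv q p hpq.symm c * elemTransv p q hpq y * (elemTransv q p hpq.symm c)⁻¹) *
        (elemTransv k p hkp r)⁻¹ ∈ Fgrp (n := n) a := by
  rw [conj_conj, et_conj_comm hkp hpq.symm hpq hkp.symm r c,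
    et_conj1 hkp hpq hkq r y, conj_mul',
    et_conj2 hkq hpq.symm hkp (r * y) c]
  refine mul_mem (mul_mem (mem_F_e a hkp ?_) (mem_F_e a hkq ?_)) (mem_F_z a hpq hy c)
  · exact neg_mem (Ideal.mul_mem_right _ _ (Ideal.mul_mem_left _ _ hy))
  · exact Ideal.mul_mem_left _ _ hy

/-- conjugation by `e_kl(r)`, `{k,l} ∩ {p,q} = ∅`. -/
lemma case7 (hpq : p ≠ q) (hkl : k ≠ l) (hkp : k ≠ p) (hkq : k ≠ q) (hlp : l ≠ p)
    (hlq : l ≠ q) {y : R} (hy : y ∈ a ^ 2) (r c : R) :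
    elemTransv k l hkl r *
        (elemTransv q p hpq.symm c * elemTransv p q hpq y * (elemTransv q p hpq.symm c)⁻¹) *
        (elemTransv k l hkl r)⁻¹ ∈ Fgrp (n := n) a := by
  rw [conj_conj, et_conj_comm hkl hpq.symm hlq hkp.symm r c,
    et_conj_comm hkl hpq hlp hkq.symm r y]
  exact mem_F_z a hpq hy c

end Cases

/-- Main conjugation lemma. -/
lemma conj_z_mem (hn : 3 ≤ n) {k l : Fin n} (hkl : k ≠ l) (r : R)
    {p q : Fin n} (hpq : p ≠ q) {y : R} (hy : y ∈ a ^ 2) (c : R) :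
    elemTransv k l hkl r *
        (elemTransv q p hpq.symm c * elemTransv p q hpq y * (elemTransv q p hpq.symm c)⁻¹) *
        (elemTransv k l hkl r)⁻¹ ∈ Fgrp (n := n) a := by
  by_cases hkq : k = q
  · subst hkq
    by_cases hlp : l = p
    · subst hlp
      exact caseA a hpq hy r c
    · exact case3 a hpq hkl (Ne.symm hlp) hy r c
  · by_cases hkp : k = p
    · subst hkp
      by_cases hlq : l = q
      · subst hlq
        exact caseB a hn hpq hy r c
      · exact case4 a hpq hkl (Ne.symm hlq) hy r c
    · by_cases hlq : l = q
      · subst hlq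
        exact case5 a hpq hkl hkp hy r c
      · by_cases hlp : l = p
        · subst hlp
          exact case6 a hpq hkl hkq hy r c
        · exact case7 a hpq hkl hkp hkq hlp hlq hy r c

/-- `F` is stable under conjugation by elementary transvections. -/
lemma conj_F_mem (hn : 3 ≤ n) {k l : Fin n} (hkl : k ≠ l) (r : R) {f : SL n R}
    (hf : f ∈ Fgrp (n := n) a) :
    elemTransv k l hkl r * f * (elemTransv k l hkl r)⁻¹ ∈ Fgrp (n := n) a := by
  induction hf using Subgroup.closure_induction with
  | mem x hx =>
    obtain ⟨p, q, hpq, c, y, hy, rfl⟩ := hx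
    exact conj_z_mem a hn hkl r hpq hy c
  | one => simpa using one_mem _
  | mul x y hx hy ihx ihy =>
    rw [conj_mul']
    exact mul_mem ihx ihy
  | inv x hx ihx =>
    have key : elemTransv k l hkl r * x⁻¹ * (elemTransv k l hkl r)⁻¹
        = (elemTransv k l hkl r * x * (elemTransv k l hkl r)⁻¹)⁻¹ := by group
    rw [key]
    exact inv_mem ihx

lemma Esub_le_normalizer (hn : 3 ≤ n) :
    Esub n (Set.univ : Set R) ≤ Subgroup.normalizer (Fgrp (n := n) a : Set (SL n R)) := by
  rw [Esub, Subgroup.closure_le]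
  rintro x ⟨i, j, hij, r, -, rfl⟩
  rw [SetLike.mem_coe, Subgroup.mem_normalizer_iff]
  intro f
  constructor
  · exact fun hf => conj_F_mem a hn hij r hf
  · intro hf
    have h2 := conj_F_mem a hn hij (-r) hf
    rw [← et_inv] at h2
    have key : (elemTransv i j hij r)⁻¹ *
          (elemTransv i j hij r * f * (elemTransv i j hij r)⁻¹) *
          ((elemTransv i j hij r)⁻¹)⁻¹ = f := by group
    rwa [key] at h2

theorem relE_sq_le_Esub'
    (hn : 3 ≤ n) (a : Ideal R) :
    relE n (a ^ 2) ≤ Esub n (a : Set R) := by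
  have hF_le : Fgrp (n := n) a ≤ Esub n (a : Set R) := by
    rw [Fgrp, Subgroup.closure_le]
    rintro x ⟨p, q, hpq, c, y, hy, rfl⟩
    exact z_mem_Esub a hn hpq hy c
  refine le_trans ?_ hF_le
  rw [relE, relESet, Subgroup.closure_le]
  rintro x ⟨g, hg, yy, ⟨p, q, hpq, x₀, hx₀, rfl⟩, rfl⟩
  have hyF : elemTransv p q hpq x₀ ∈ Fgrp (n := n) a := mem_F_e a hpq hx₀
  have hgN := Esub_le_normalizer a hn hg
  exact SetLike.mem_coe.mpr ((Subgroup.mem_normalizer_iff.mp hgN _).mp hyF)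

end TS


/-- For a commutative ring `R`, `n ≥ 3` and an ideal `𝔞 ⊴ R`,
`E(n,R,𝔞²) ≤ E(n,𝔞)`. -/
theorem relE_sq_le_Esub
    {R : Type*} [CommRing R] (n : ℕ) (hn : 3 ≤ n) (a : Ideal R) :
    relE n (a ^ 2) ≤ Esub n (a : Set R) :=
  TS.relE_sq_le_Esub' hn a
end

section
/- Let R be a Noetherian commutative ring, s ∈ R, and n ≥ 1 a natural number. Then there exists a natural number k such that the group homomorphism F_s : SL(n,R) → SL(n,R_s) induced by the localization homomorphism R → R_s is injective on the principal congruence subgroup SL(n,R, s^kR), where s^kR is the principal ideal generated by s^k. (Type A_{n−1} instance of the paper's Lemma on injectivity of the localization homomorphism for Noetherian rings.) -/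
open Matrix

/-- The homomorphism `SL(n,R) → SL(n,R_s)` induced by the localization map
`F_s : R → R_s = Localization.Away s`, applied entrywise. -/
noncomputable def locMap (n : ℕ) {R : Type*} [CommRing R] (s : R) :
    SL n R →* SL n (Localization.Away s) :=
  Matrix.SpecialLinearGroup.map (algebraMap R (Localization.Away s))


theorem key_pow_annihilator {R : Type*} [CommRing R] [IsNoetherianRing R] (s : R) :
    ∃ k : ℕ, ∀ r : R, (∃ m : ℕ, s ^ m * (s ^ k * r) = 0) → s ^ k * r = 0 := by
  have inst : IsNoetherian R R := inferInstance
  have hmono : Monotone fun i : ℕ => LinearMap.ker (LinearMap.mulLeft R (s ^ i)) := by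
    intro i j hij r hr
    obtain ⟨d, rfl⟩ := Nat.exists_eq_add_of_le hij
    simp only [LinearMap.mem_ker, LinearMap.mulLeft_apply] at *
    rw [pow_add, mul_comm (s ^ i), mul_assoc, hr, mul_zero]
  obtain ⟨k, hk⟩ := monotone_stabilizes_iff_noetherian.mpr inst
    ⟨fun i => LinearMap.ker (LinearMap.mulLeft R (s ^ i)), hmono⟩
  refine ⟨k, fun r ⟨m, hm⟩ => ?_⟩
  have : r ∈ LinearMap.ker (LinearMap.mulLeft R (s ^ (k + m))) := by
    simp only [LinearMap.mem_ker, LinearMap.mulLeft_apply]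
    rw [pow_add, mul_comm (s ^ k), mul_assoc]
    exact hm
  have h2 := hk (k + m) (Nat.le_add_right k m)
  simp only [OrderHom.coe_mk] at h2
  rw [← h2] at this
  simpa using this

theorem mem_SLcong_iff' {R : Type*} [CommRing R] {n : ℕ} {I : Ideal R} {A : SL n R} :
    A ∈ SLcong n I ↔ ∀ i j, (A : Matrix (Fin n) (Fin n) R) i j -
      (1 : Matrix (Fin n) (Fin n) R) i j ∈ I := by
  constructor
  · intro hA i j
    have h1 : redMap n I A = 1 := hA
    have h2 := congrFun (congrFun (congrArg
      (fun M : SL n (R ⧸ I) => (M : Matrix (Fin n) (Fin n) (R ⧸ I))) h1) i) j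
    simp only [redMap, Matrix.SpecialLinearGroup.map_apply_coe, RingHom.mapMatrix_apply,
      Matrix.map_apply, Matrix.SpecialLinearGroup.coe_one] at h2
    rw [← Ideal.Quotient.eq]
    rw [h2, Matrix.one_apply]
    split_ifs with hij <;> simp [Matrix.one_apply, hij]
  · intro hA
    have : redMap n I A = 1 := by
      apply Subtype.ext
      ext i j
      simp only [redMap, Matrix.SpecialLinearGroup.map_apply_coe, RingHom.mapMatrix_apply,
        Matrix.map_apply, Matrix.SpecialLinearGroup.coe_one]
      have := Ideal.Quotient.eq.mpr (hA i j)
      rw [this, Matrix.one_apply]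
      split_ifs with hij <;> simp [Matrix.one_apply, hij]
    exact this

/-- For a Noetherian commutative ring `R`, `s ∈ R` and `n ≥ 1`, there is `k`
such that `F_s : SL(n,R) → SL(n,R_s)` is injective on `SL(n,R,s^kR)`. -/
theorem exists_locMap_injOn_SLcong_of_noetherian
    {R : Type*} [CommRing R] [IsNoetherianRing R] (n : ℕ) (hn : 1 ≤ n) (s : R) :
    ∃ k : ℕ, Set.InjOn (locMap n s)
      (SLcong n (Ideal.span ({s ^ k} : Set R)) : Set (SL n R)) := by
  
  obtain ⟨k, hk⟩ := key_pow_annihilator s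
  refine ⟨k, ?_⟩
  intro A hA B hB h
  apply Subtype.ext
  ext i j
  have hAe := mem_SLcong_iff'.mp hA i j
  have hBe := mem_SLcong_iff'.mp hB i j
  have hd : (A : Matrix (Fin n) (Fin n) R) i j - (B : Matrix (Fin n) (Fin n) R) i j
      ∈ Ideal.span ({s ^ k} : Set R) := by
    have := Ideal.sub_mem _ hAe hBe
    simpa using this
  obtain ⟨r, hr⟩ := Ideal.mem_span_singleton.mp hd
  have he := congrFun (congrFun (congrArg
    (fun M : SL n (Localization.Away s) =>
      (M : Matrix (Fin n) (Fin n) (Localization.Away s))) h) i) j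
  simp only [locMap, Matrix.SpecialLinearGroup.map_apply_coe, RingHom.mapMatrix_apply,
    Matrix.map_apply] at he
  obtain ⟨c, hc⟩ := (IsLocalization.eq_iff_exists (Submonoid.powers s) _).mp he
  obtain ⟨m, hm⟩ := c.2
  have hz : s ^ m * ((A : Matrix (Fin n) (Fin n) R) i j
      - (B : Matrix (Fin n) (Fin n) R) i j) = 0 := by
    have hm' : s ^ m = (c : R) := hm
    rw [mul_sub, hm', hc, sub_self]
  rw [hr] at hz
  have := hk r ⟨m, hz⟩
  rw [← hr] at this
  exact sub_eq_zero.mp this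
end

section
/- Let R be a commutative ring whose Jacobson radical is zero, let s ∈ R with s ≠ 0, and let n ≥ 1 be a natural number. Then the group homomorphism F_s : SL(n,R) → SL(n,R_s) induced by the localization homomorphism R → R_s is injective on the principal congruence subgroup SL(n,R, sR), where sR is the principal ideal generated by s. (Type A_{n−1} instance of the paper's Lemma on injectivity of the localization homomorphism for rings with Rad(R) = 0.) -/
open Matrix

/-- If `Rad(R) = 0`, an element of `(s)` annihilated by a power of `s` is zero. -/
lemma eq_zero_of_mem_span_of_pow_mul_eq_zero
    {R : Type*} [CommRing R] (hrad : Ideal.jacobson (⊥ : Ideal R) = ⊥)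
    (s x : R) (hx : x ∈ Ideal.span ({s} : Set R)) (k : ℕ) (hk : s ^ k * x = 0) :
    x = 0 := by
  have hmem : x ∈ Ideal.jacobson (⊥ : Ideal R) := by
    rw [Ideal.jacobson]
    simp only [Ideal.mem_sInf, Set.mem_setOf_eq]
    rintro J ⟨-, hJ⟩
    by_cases hsJ : s ∈ J
    · obtain ⟨c, rfl⟩ := Ideal.mem_span_singleton'.mp hx
      exact J.mul_mem_left c hsJ
    · have hprime : J.IsPrime := hJ.isPrime
      have h0 : s ^ k * x ∈ J := hk ▸ J.zero_mem
      rcases hprime.mem_or_mem h0 with h | h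
      · exact absurd (hprime.mem_of_pow_mem k h) hsJ
      · exact h
  rw [hrad] at hmem
  simpa using hmem

/-- For a commutative ring `R` with `Rad(R) = 0`, `s ≠ 0` and `n ≥ 1`,
`F_s : SL(n,R) → SL(n,R_s)` is injective on `SL(n,R,sR)`. -/
theorem locMap_injOn_SLcong_of_jacobson_eq_bot
    {R : Type*} [CommRing R] (hrad : Ideal.jacobson (⊥ : Ideal R) = ⊥)
    (n : ℕ) (hn : 1 ≤ n) (s : R) (hs : s ≠ 0) :
    Set.InjOn (locMap n s)
      (SLcong n (Ideal.span ({s} : Set R)) : Set (SL n R)) := by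
  intro A hA B hB hAB
  have hAq : (A.1.map (Ideal.Quotient.mk (Ideal.span ({s} : Set R)))) = 1 := by
    have := MonoidHom.mem_ker.mp hA
    exact congrArg Subtype.val this
  have hBq : (B.1.map (Ideal.Quotient.mk (Ideal.span ({s} : Set R)))) = 1 := by
    have := MonoidHom.mem_ker.mp hB
    exact congrArg Subtype.val this
  have hABm : A.1.map (algebraMap R (Localization.Away s))
      = B.1.map (algebraMap R (Localization.Away s)) :=
    congrArg Subtype.val hAB
  ext i j
  -- difference lies in (s)
  have hdiff : A.1 i j - B.1 i j ∈ Ideal.span ({s} : Set R) := by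
    have h1 : Ideal.Quotient.mk (Ideal.span ({s} : Set R)) (A.1 i j)
        = Ideal.Quotient.mk (Ideal.span ({s} : Set R)) (B.1 i j) := by
      have hA' := congrFun (congrFun hAq i) j
      have hB' := congrFun (congrFun hBq i) j
      simp only [Matrix.map_apply] at hA' hB'
      rw [hA', hB']
    exact Ideal.Quotient.eq.mp h1
  -- difference is annihilated by a power of s
  have hz : algebraMap R (Localization.Away s) (A.1 i j - B.1 i j) = 0 := by
    have h2 := congrFun (congrFun hABm i) j
    simp only [Matrix.map_apply] at h2
    rw [map_sub, h2, sub_self]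
  obtain ⟨m, hm⟩ :=
    (IsLocalization.map_eq_zero_iff (Submonoid.powers s) (Localization.Away s) _).mp hz
  obtain ⟨k, hk⟩ := m.2
  have : s ^ k * (A.1 i j - B.1 i j) = 0 := by
    rw [show s ^ k = (m : R) from hk]; exact hm
  have := eq_zero_of_mem_span_of_pow_mul_eq_zero hrad s _ hdiff k this
  exact sub_eq_zero.mp this
end
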